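/- arXiv:1602.04014 — 7 statements merged into one kernel-verified Lean document; each statement's English description precedes it below -/
import Mathlib

section
/- Let X be a complex Banach space with open unit ball B. Then for every x ∈ B, K_B(0, x) = ω(0, ‖x‖) = tanh⁻¹(‖x‖), where K_B is the Kobayashi pseudo-metric on B and ω is the Poincaré metric on the unit disc. -/
open Metric

/-- Inverse hyperbolic tangent, `tanh⁻¹ t`. -/
noncomputable def artanh (t : ℝ) : ℝ := Real.log ((1 + t) / (1 - t)) / 2

/-- The Poincaré distance on the open unit disc in `ℂ`. -/
noncomputable def poincare (a b : ℂ) : ℝ :=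
  artanh (‖a - b‖ / ‖1 - (starRingEnd ℂ) a * b‖)

/-- An analytic chain joining `x` and `y` in the open unit ball of a complex normed space `X`:
points `z i`, `w i` of the unit disc and holomorphic maps `f i` from the unit disc into the
unit ball with `f 0 (z 0) = x`, `f i (w i) = f (i+1) (z (i+1))`, `f (n-1) (w (n-1)) = y`. -/
structure AnalyticChain (X : Type*) [NormedAddCommGroup X] [NormedSpace ℂ X]
    (x y : X) : Type _ where
  n : ℕ
  npos : 0 < n
  z : ℕ → ℂ
  w : ℕ → ℂ
  hz : ∀ i < n, ‖z i‖ < 1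
  hw : ∀ i < n, ‖w i‖ < 1
  f : ℕ → ℂ → X
  holo : ∀ i < n, DifferentiableOn ℂ (f i) (ball (0 : ℂ) 1)
  maps : ∀ i < n, ∀ ζ ∈ ball (0 : ℂ) 1, f i ζ ∈ ball (0 : X) 1
  first : f 0 (z 0) = x
  last : f (n - 1) (w (n - 1)) = y
  link : ∀ i, i + 1 < n → f i (w i) = f (i + 1) (z (i + 1))

/-- The total Poincaré length of an analytic chain. -/
noncomputable def AnalyticChain.length {X : Type*} [NormedAddCommGroup X] [NormedSpace ℂ X]
    {x y : X} (c : AnalyticChain X x y) : ℝ :=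
  ∑ i ∈ Finset.range c.n, poincare (c.z i) (c.w i)

/-- The Kobayashi pseudo-metric on the open unit ball of `X`: the infimum of the lengths of
analytic chains joining `x` and `y`. -/
noncomputable def kobayashi (X : Type*) [NormedAddCommGroup X] [NormedSpace ℂ X]
    (x y : X) : ℝ :=
  sInf {r : ℝ | ∃ c : AnalyticChain X x y, c.length = r}


open Complex
section Helpers

lemma artanh_nonneg {t : ℝ} (h0 : 0 ≤ t) (h1 : t < 1) : 0 ≤ artanh t := by
  unfold artanh
  have : (1:ℝ) ≤ (1 + t) / (1 - t) := by
    rw [le_div_iff₀ (by linarith)]; linarith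
  have := Real.log_nonneg this
  linarith

lemma artanh_mono {s t : ℝ} (h0 : 0 ≤ s) (hst : s ≤ t) (ht : t < 1) : artanh s ≤ artanh t := by
  unfold artanh
  have h : (1 + s) / (1 - s) ≤ (1 + t) / (1 - t) := by
    rw [div_le_div_iff₀ (by linarith) (by linarith)]; nlinarith
  have h2 : (0:ℝ) < (1 + s) / (1 - s) := by
    apply div_pos <;> linarith
  have := Real.log_le_log h2 h
  linarith

lemma artanh_add {r s : ℝ} (hr : 0 ≤ r) (hr1 : r < 1) (hs : 0 ≤ s) (hs1 : s < 1) :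
    artanh ((r + s) / (1 + r * s)) = artanh r + artanh s := by
  unfold artanh
  have h1 : (0:ℝ) < 1 + r * s := by nlinarith
  have hu1 : 1 - (r + s) / (1 + r * s) ≠ 0 := by
    have : 1 - (r + s) / (1 + r * s) = (1 + r*s - r - s)/(1 + r*s) := by field_simp; ring
    rw [this]
    exact (div_pos (by nlinarith) h1).ne'
  have key : (1 + (r + s) / (1 + r * s)) / (1 - (r + s) / (1 + r * s))
      = ((1 + r) / (1 - r)) * ((1 + s) / (1 - s)) := by
    rw [div_mul_div_comm, div_eq_div_iff hu1
      (mul_pos (by linarith : (0:ℝ) < 1-r) (by linarith : (0:ℝ) < 1-s)).ne']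
    field_simp
    ring
  rw [key, Real.log_mul (div_pos (by linarith) (by linarith)).ne'
    (div_pos (by linarith) (by linarith)).ne']
  ring

lemma key_identity (a b : ℂ) :
    ‖1 - (starRingEnd ℂ) a * b‖ ^ 2 - ‖a - b‖ ^ 2
      = (1 - ‖a‖ ^ 2) * (1 - ‖b‖ ^ 2) := by
  simp only [Complex.sq_norm, Complex.normSq_apply, Complex.sub_re, Complex.sub_im,
    Complex.mul_re, Complex.mul_im, Complex.one_re, Complex.one_im, Complex.conj_re,
    Complex.conj_im]
  ring

lemma sq_abs_sub (a b : ℂ) : ‖a - b‖ ^ 2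
    = ‖a‖ ^ 2 + ‖b‖ ^ 2 - 2 * ((starRingEnd ℂ) a * b).re := by
  simp only [Complex.sq_norm, Complex.normSq_apply, Complex.sub_re, Complex.sub_im,
    Complex.mul_re, Complex.mul_im, Complex.conj_re, Complex.conj_im]
  ring

lemma sq_abs_one_sub (a b : ℂ) : ‖1 - (starRingEnd ℂ) a * b‖ ^ 2
    = 1 - 2 * ((starRingEnd ℂ) a * b).re + ‖a‖ ^ 2 * ‖b‖ ^ 2 := by
  simp only [Complex.sq_norm, Complex.normSq_apply, Complex.sub_re, Complex.sub_im,
    Complex.mul_re, Complex.mul_im, Complex.conj_re, Complex.conj_im,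
    Complex.one_re, Complex.one_im]
  ring

noncomputable def mob (a ζ : ℂ) : ℂ := (a - ζ) / (1 - (starRingEnd ℂ) a * ζ)

lemma denom_ne {a ζ : ℂ} (h : ‖a‖ * ‖ζ‖ < 1) :
    1 - (starRingEnd ℂ) a * ζ ≠ 0 := by
  intro h0
  have : (starRingEnd ℂ) a * ζ = 1 := by linear_combination -h0
  have := congrArg norm this
  simp [map_mul] at this
  rw [this] at h
  exact lt_irrefl _ h

lemma mul_abs_lt_one {a ζ : ℂ} (ha : ‖a‖ < 1) (hz : ‖ζ‖ < 1) :
    ‖a‖ * ‖ζ‖ < 1 := by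
  nlinarith [norm_nonneg a, norm_nonneg ζ]

lemma abs_lt_denom {a ζ : ℂ} (ha : ‖a‖ < 1) (hz : ‖ζ‖ < 1) :
    ‖a - ζ‖ < ‖1 - (starRingEnd ℂ) a * ζ‖ := by
  have hpos : 0 < (1 - ‖a‖ ^ 2) * (1 - ‖ζ‖ ^ 2) := by
    apply mul_pos <;> nlinarith [norm_nonneg a, norm_nonneg ζ]
  have h2 : ‖a - ζ‖ ^ 2 < ‖1 - (starRingEnd ℂ) a * ζ‖ ^ 2 := by
    nlinarith [key_identity a ζ]
  exact lt_of_pow_lt_pow_left₀ 2 (norm_nonneg _) h2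

lemma abs_mob_lt_one {a ζ : ℂ} (ha : ‖a‖ < 1) (hz : ‖ζ‖ < 1) :
    ‖mob a ζ‖ < 1 := by
  have hd := denom_ne (mul_abs_lt_one ha hz)
  have hdpos : 0 < ‖1 - (starRingEnd ℂ) a * ζ‖ := by
    simpa [norm_pos_iff] using hd
  rw [mob, norm_div, div_lt_one hdpos]
  exact abs_lt_denom ha hz

lemma mob_self (a : ℂ) : mob a a = 0 := by simp [mob]

lemma mob_zero (a : ℂ) : mob a 0 = a := by simp [mob]

lemma conj_self_ne {a : ℂ} (ha : ‖a‖ < 1) : (1:ℂ) - (starRingEnd ℂ) a * a ≠ 0 := by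
  intro h0
  have : (starRingEnd ℂ) a * a = 1 := by linear_combination -h0
  have := congrArg norm this
  simp [map_mul] at this
  nlinarith [norm_nonneg a]

lemma mob_mob {a ζ : ℂ} (ha : ‖a‖ < 1) (hz : ‖ζ‖ < 1) :
    mob a (mob a ζ) = ζ := by
  have hd := denom_ne (mul_abs_lt_one ha hz)
  have haa' := conj_self_ne ha
  have e1 : a - (a - ζ) / (1 - (starRingEnd ℂ) a * ζ)
      = (ζ * (1 - (starRingEnd ℂ) a * a)) / (1 - (starRingEnd ℂ) a * ζ) := by
    rw [eq_div_iff hd, sub_mul, div_mul_cancel₀ _ hd]; ring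
  have e2 : 1 - (starRingEnd ℂ) a * ((a - ζ) / (1 - (starRingEnd ℂ) a * ζ))
      = (1 - (starRingEnd ℂ) a * a) / (1 - (starRingEnd ℂ) a * ζ) := by
    field_simp; ring
  unfold mob
  rw [e1, e2, div_div_div_cancel_right₀, mul_div_assoc, div_self haa', mul_one]
  exact hd

lemma mob_bound {a b : ℂ} (ha : ‖a‖ < 1) (hb : ‖b‖ < 1) :
    ‖a - b‖ * (1 + ‖a‖ * ‖b‖)
      ≤ (‖a‖ + ‖b‖) * ‖1 - (starRingEnd ℂ) a * b‖ := by
  have hr0 : 0 ≤ ‖a‖ := norm_nonneg a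
  have hs0 : 0 ≤ ‖b‖ := norm_nonneg b
  have h1 := sq_abs_sub a b
  have h2 := sq_abs_one_sub a b
  have h3 : |((starRingEnd ℂ) a * b).re| ≤ ‖a‖ * ‖b‖ := by
    calc |((starRingEnd ℂ) a * b).re| ≤ ‖(starRingEnd ℂ) a * b‖ :=
        Complex.abs_re_le_norm _
    _ = ‖a‖ * ‖b‖ := by rw [norm_mul, Complex.norm_conj]
  have h3' : -(‖a‖ * ‖b‖) ≤ ((starRingEnd ℂ) a * b).re :=
    neg_le_of_abs_le h3
  have h5 : 0 ≤ (((starRingEnd ℂ) a * b).re + ‖a‖ * ‖b‖)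
      * ((1 - ‖a‖ ^ 2) * (1 - ‖b‖ ^ 2)) := by
    apply mul_nonneg (by linarith)
    apply mul_nonneg <;> nlinarith
  have hsq : (‖a - b‖ * (1 + ‖a‖ * ‖b‖)) ^ 2
      ≤ ((‖a‖ + ‖b‖) * ‖1 - (starRingEnd ℂ) a * b‖) ^ 2 := by
    rw [mul_pow, mul_pow, h1, h2]
    nlinarith [h5]
  exact le_of_pow_le_pow_left₀ two_ne_zero
    (mul_nonneg (by linarith) (norm_nonneg _)) hsq

lemma artanh_tri {b c : ℂ} (hb : ‖b‖ < 1) (hc : ‖c‖ < 1) :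
    artanh (‖c‖)
      ≤ artanh (‖b‖)
        + artanh (‖b - c‖ / ‖1 - (starRingEnd ℂ) b * c‖) := by
  set d := mob b c with hd
  have hdlt : ‖d‖ < 1 := abs_mob_lt_one hb hc
  have hda : ‖d‖ = ‖b - c‖ / ‖1 - (starRingEnd ℂ) b * c‖ := by
    rw [hd, mob, norm_div]
  have hcd : c = mob b d := (mob_mob hb hc).symm
  have hb0 : 0 ≤ ‖b‖ := norm_nonneg b
  have hd0 : 0 ≤ ‖d‖ := norm_nonneg d
  have hden : (0:ℝ) < 1 + ‖b‖ * ‖d‖ := by nlinarith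
  have hbound : ‖c‖
      ≤ (‖b‖ + ‖d‖) / (1 + ‖b‖ * ‖d‖) := by
    rw [hcd, mob, norm_div, div_le_div_iff₀ (by
        simpa [norm_pos_iff] using denom_ne (mul_abs_lt_one hb hdlt)) hden]
    exact mob_bound hb hdlt
  have hq : (‖b‖ + ‖d‖) / (1 + ‖b‖ * ‖d‖) < 1 := by
    rw [div_lt_one hden]; nlinarith
  calc artanh (‖c‖)
      ≤ artanh ((‖b‖ + ‖d‖) / (1 + ‖b‖ * ‖d‖)) :=
        artanh_mono (norm_nonneg c) hbound hq
    _ = artanh (‖b‖) + artanh (‖d‖) := artanh_add hb0 hb hd0 hdlt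
    _ = _ := by rw [hda]

lemma poincare_eq_artanh (a b : ℂ) : poincare a b = artanh (‖mob a b‖) := by
  rw [poincare, mob, norm_div]

lemma mob_abs_comm (a b : ℂ) : ‖mob a b‖ = ‖mob b a‖ := by
  unfold mob
  rw [norm_div, norm_div, show a - b = -(b - a) by ring, norm_neg]
  congr 1
  have h : (1 : ℂ) - (starRingEnd ℂ) b * a = (starRingEnd ℂ) (1 - (starRingEnd ℂ) a * b) := by
    simp only [map_sub, map_mul, map_one, Complex.conj_conj]
    ring
  rw [h, Complex.norm_conj]

lemma poincare_nonneg {a b : ℂ} (ha : ‖a‖ < 1) (hb : ‖b‖ < 1) :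
    0 ≤ poincare a b := by
  rw [poincare_eq_artanh]
  exact artanh_nonneg (norm_nonneg _) (abs_mob_lt_one ha hb)

lemma poincare_zero (b : ℂ) : poincare 0 b = artanh (‖b‖) := by
  simp [poincare, map_zero]

lemma mob_diff {a : ℂ} (ha : ‖a‖ < 1) :
    DifferentiableOn ℂ (mob a) (ball (0:ℂ) 1) := by
  apply DifferentiableOn.div
  · exact (differentiable_const a |>.sub differentiable_id).differentiableOn
  · exact ((differentiable_const (1:ℂ)).sub
      ((differentiable_const _).mul differentiable_id)).differentiableOn
  · intro ζ hζ
    exact denom_ne (mul_abs_lt_one ha (by simpa using mem_ball_zero_iff.mp hζ))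

lemma mob_mapsTo {a : ℂ} (ha : ‖a‖ < 1) :
    Set.MapsTo (mob a) (ball (0:ℂ) 1) (ball (0:ℂ) 1) := fun ζ hζ => by
  rw [mem_ball_zero_iff] at *
  simpa using
    abs_mob_lt_one ha (by simpa using hζ)

lemma schwarz_pick {f : ℂ → ℂ} (hd : DifferentiableOn ℂ f (ball (0:ℂ) 1))
    (hm : Set.MapsTo f (ball (0:ℂ) 1) (ball (0:ℂ) 1)) {z w : ℂ}
    (hz : ‖z‖ < 1) (hw : ‖w‖ < 1) :
    ‖mob (f w) (f z)‖ ≤ ‖mob w z‖ := by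
  have hmem : ∀ u : ℂ, ‖u‖ < 1 → u ∈ ball (0:ℂ) 1 := fun u hu =>
    mem_ball_zero_iff.mpr (by simpa using hu)
  have habs : ∀ u : ℂ, u ∈ ball (0:ℂ) 1 → ‖u‖ < 1 := fun u hu =>
    by simpa using mem_ball_zero_iff.mp hu
  have hfw : ‖f w‖ < 1 := habs _ (hm (hmem _ hw))
  set g : ℂ → ℂ := fun ζ => mob (f w) (f (mob w ζ)) with hgdef
  have hdg : DifferentiableOn ℂ g (ball (0:ℂ) 1) :=
    ((mob_diff hfw).comp (hd.comp (mob_diff hw) (mob_mapsTo hw)) (hm.comp (mob_mapsTo hw)))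
  have hmg : Set.MapsTo g (ball (0:ℂ) 1) (ball (0:ℂ) 1) :=
    (mob_mapsTo hfw).comp (hm.comp (mob_mapsTo hw))
  have hg0 : g 0 = 0 := by simp [hgdef, mob_zero, mob_self]
  have h := dist_le_dist_of_mapsTo_ball_self hdg
    (fun u hu => by rw [hg0]; exact ball_subset_closedBall (hmg hu)) (hmem _ (abs_mob_lt_one hw hz))
  have hgz : g (mob w z) = mob (f w) (f z) := by rw [hgdef]; simp [mob_mob hw hz]
  simpa [hgz, hg0, Complex.dist_eq] using h

lemma poincare_sp {f : ℂ → ℂ} (hd : DifferentiableOn ℂ f (ball (0:ℂ) 1))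
    (hm : Set.MapsTo f (ball (0:ℂ) 1) (ball (0:ℂ) 1)) {z w : ℂ}
    (hz : ‖z‖ < 1) (hw : ‖w‖ < 1) :
    poincare (f z) (f w) ≤ poincare z w := by
  have hmem : ∀ u : ℂ, ‖u‖ < 1 → u ∈ ball (0:ℂ) 1 := fun u hu =>
    mem_ball_zero_iff.mpr (by simpa using hu)
  have habs : ∀ u : ℂ, u ∈ ball (0:ℂ) 1 → ‖u‖ < 1 := fun u hu =>
    by simpa using mem_ball_zero_iff.mp hu
  rw [poincare_eq_artanh, poincare_eq_artanh]
  apply artanh_mono (norm_nonneg _) _ (abs_mob_lt_one hz hw)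
  calc ‖mob (f z) (f w)‖ = ‖mob (f w) (f z)‖ := mob_abs_comm _ _
    _ ≤ ‖mob w z‖ := schwarz_pick hd hm hz hw
    _ = ‖mob z w‖ := mob_abs_comm _ _

end Helpers

lemma artanh_zero : artanh 0 = 0 := by simp [artanh]


section Main

variable {X : Type*} [NormedAddCommGroup X] [NormedSpace ℂ X]

lemma chain_length_lower [CompleteSpace X] (x : X) (hx : ‖x‖ < 1)
    (c : AnalyticChain X 0 x) : artanh ‖x‖ ≤ c.length := by
  have memball : ∀ u : ℂ, ‖u‖ < 1 → u ∈ ball (0:ℂ) 1 := fun u hu =>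
    mem_ball_zero_iff.mpr (by simpa using hu)
  by_cases hx0 : x = 0
  · subst hx0
    simp only [norm_zero, artanh_zero]
    apply Finset.sum_nonneg
    intro i hi
    rw [Finset.mem_range] at hi
    exact poincare_nonneg (c.hz i hi) (c.hw i hi)
  · obtain ⟨ℓ, hl1, hlx⟩ := exists_dual_vector ℂ x (norm_ne_zero_iff.mpr hx0)
    set g : ℕ → ℂ → ℂ := fun i ζ => ℓ (c.f i ζ) with hgdef
    have habs : ∀ i, i < c.n → ∀ ζ, ‖ζ‖ < 1 → ‖g i ζ‖ < 1 := by
      intro i hi ζ hζ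
      have hy : c.f i ζ ∈ ball (0:X) 1 := c.maps i hi ζ (memball ζ hζ)
      rw [mem_ball_zero_iff] at hy
      have : ‖ℓ (c.f i ζ)‖ ≤ ‖ℓ‖ * ‖c.f i ζ‖ := ℓ.le_opNorm _
      rw [hl1, one_mul] at this
      calc ‖g i ζ‖ = ‖ℓ (c.f i ζ)‖ := rfl
        _ ≤ ‖c.f i ζ‖ := this
        _ < 1 := hy
    have hdg : ∀ i, i < c.n → DifferentiableOn ℂ (g i) (ball (0:ℂ) 1) := fun i hi =>
      ℓ.differentiable.comp_differentiableOn (c.holo i hi)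
    have hmg : ∀ i, i < c.n → Set.MapsTo (g i) (ball (0:ℂ) 1) (ball (0:ℂ) 1) := by
      intro i hi ζ hζ
      exact memball _ (habs i hi ζ
        (by simpa using mem_ball_zero_iff.mp hζ))
    have key : ∀ k, k < c.n → artanh (‖g k (c.w k)‖)
        ≤ ∑ i ∈ Finset.range (k + 1), poincare (c.z i) (c.w i) := by
      intro k
      induction k with
      | zero =>
        intro hk
        rw [Finset.sum_range_one]
        have hz0 : g 0 (c.z 0) = 0 := by rw [hgdef]; simp [c.first]
        calc artanh (‖g 0 (c.w 0)‖)
            = poincare (g 0 (c.z 0)) (g 0 (c.w 0)) := by rw [hz0, poincare_zero]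
          _ ≤ poincare (c.z 0) (c.w 0) :=
              poincare_sp (hdg 0 hk) (hmg 0 hk) (c.hz 0 hk) (c.hw 0 hk)
      | succ k ih =>
        intro hk
        have hk' : k < c.n := by omega
        have hlink : g k (c.w k) = g (k + 1) (c.z (k + 1)) := by
          rw [hgdef]; exact congrArg ℓ (c.link k hk)
        have hb : ‖g (k + 1) (c.z (k + 1))‖ < 1 :=
          habs _ hk _ (c.hz _ hk)
        have hc' : ‖g (k + 1) (c.w (k + 1))‖ < 1 :=
          habs _ hk _ (c.hw _ hk)
        rw [Finset.sum_range_succ]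
        calc artanh (‖g (k + 1) (c.w (k + 1))‖)
            ≤ artanh (‖g (k + 1) (c.z (k + 1))‖)
              + poincare (g (k + 1) (c.z (k + 1))) (g (k + 1) (c.w (k + 1))) :=
              artanh_tri hb hc'
          _ ≤ (∑ i ∈ Finset.range (k + 1), poincare (c.z i) (c.w i))
              + poincare (c.z (k + 1)) (c.w (k + 1)) := by
              apply add_le_add
              · rw [← hlink]; exact ih hk'
              · exact poincare_sp (hdg _ hk) (hmg _ hk) (c.hz _ hk) (c.hw _ hk)
    have hlast : g (c.n - 1) (c.w (c.n - 1)) = (‖x‖ : ℂ) := by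
      rw [hgdef]; simp only []
      rw [c.last, hlx]
      norm_cast
    have hfin := key (c.n - 1) (by have := c.npos; omega)
    rw [hlast] at hfin
    rw [Nat.sub_add_cancel c.npos] at hfin
    have : ‖(‖x‖ : ℂ)‖ = ‖x‖ := by
      rw [Complex.norm_real, Real.norm_eq_abs, _root_.abs_of_nonneg (norm_nonneg x)]
    rw [this] at hfin
    exact hfin

lemma chain_exists (x : X) (hx : ‖x‖ < 1) :
    ∃ c : AnalyticChain X 0 x, c.length = artanh ‖x‖ := by
  classical
  set v : X := if x = 0 then 0 else (‖x‖ : ℂ)⁻¹ • x with hv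
  have hvn : ‖v‖ ≤ 1 := by
    rw [hv]
    split_ifs with h
    · simp
    · have hxn : ‖x‖ ≠ 0 := norm_ne_zero_iff.mpr h
      rw [norm_smul, norm_inv, Complex.norm_real, Real.norm_eq_abs,
        _root_.abs_of_nonneg (norm_nonneg x), inv_mul_cancel₀ hxn]
  have hlast : (‖x‖ : ℂ) • v = x := by
    rw [hv]
    split_ifs with h
    · simp [h]
    · rw [smul_smul, mul_inv_cancel₀ (by
        simpa [Complex.ofReal_eq_zero] using norm_ne_zero_iff.mpr h), one_smul]
  refine ⟨⟨1, one_pos, fun _ => 0, fun _ => (‖x‖ : ℂ), ?_, ?_, fun _ ζ => ζ • v,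
    ?_, ?_, ?_, ?_, ?_⟩, ?_⟩
  · intro i _; simp
  · intro i _
    rw [Complex.norm_real, Real.norm_eq_abs, _root_.abs_of_nonneg (norm_nonneg x)]
    exact hx
  · intro i _
    exact (differentiable_id.smul_const v).differentiableOn
  · intro i _ ζ hζ
    rw [mem_ball_zero_iff] at *
    calc ‖ζ • v‖ = ‖ζ‖ * ‖v‖ := norm_smul ζ v
      _ ≤ ‖ζ‖ * 1 := by
          apply mul_le_mul_of_nonneg_left hvn (norm_nonneg ζ)
      _ < 1 := by rwa [mul_one]
  · simp
  · simpa using hlast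
  · intro i hi; omega
  · show (∑ i ∈ Finset.range 1, poincare 0 ((‖x‖ : ℂ))) = artanh ‖x‖
    rw [Finset.sum_range_one, poincare_zero, Complex.norm_real, Real.norm_eq_abs,
      _root_.abs_of_nonneg (norm_nonneg x)]

end Main

/-- For the open unit ball `B` of a complex Banach space `X` and any `x ∈ B`,
`K_B(0, x) = ω(0, ‖x‖) = tanh⁻¹ ‖x‖`. -/
theorem kobayashi_zero_eq
    {X : Type*} [NormedAddCommGroup X] [NormedSpace ℂ X] [CompleteSpace X]
    (x : X) (hx : x ∈ ball (0 : X) 1) :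
    kobayashi X 0 x = poincare 0 (‖x‖ : ℂ) ∧ kobayashi X 0 x = artanh ‖x‖ := by
  have hxn : ‖x‖ < 1 := mem_ball_zero_iff.mp hx
  obtain ⟨c₀, hc₀⟩ := chain_exists x hxn
  have hmem : artanh ‖x‖ ∈ {r : ℝ | ∃ c : AnalyticChain X 0 x, c.length = r} := ⟨c₀, hc₀⟩
  have hlb : ∀ r ∈ {r : ℝ | ∃ c : AnalyticChain X 0 x, c.length = r}, artanh ‖x‖ ≤ r := by
    rintro r ⟨c, rfl⟩
    exact chain_length_lower x hxn c
  have hk : kobayashi X 0 x = artanh ‖x‖ := by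
    rw [kobayashi]
    exact le_antisymm (csInf_le ⟨artanh ‖x‖, hlb⟩ hmem) (le_csInf ⟨_, hmem⟩ hlb)
  refine ⟨?_, hk⟩
  rw [hk, poincare_zero, Complex.norm_real, Real.norm_eq_abs, _root_.abs_of_nonneg (norm_nonneg x)]
end

section
/- Let H, K be complex Hilbert spaces, let A, Z be bounded operators from K to H with ‖A‖ < 1 and ‖Z‖ < 1. Then the operator identity (Z − A)(I − A*A)⁻¹(I − A*Z) = (I − ZA*)(I − AA*)⁻¹(Z − A) holds. -/
open ContinuousLinearMap

set_option maxHeartbeats 1000000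

/-- For Hilbert spaces `H, K` and contractions `A, Z : K → H`
(`‖A‖ < 1`, `‖Z‖ < 1`), with `BK = (I − A*A)⁻¹` and `BH = (I − AA*)⁻¹`, one has the operator
identity `(Z − A)(I − A*A)⁻¹(I − A*Z) = (I − ZA*)(I − AA*)⁻¹(Z − A)`. -/
theorem operator_identity
    {H K : Type*} [NormedAddCommGroup H] [InnerProductSpace ℂ H] [CompleteSpace H]
    [NormedAddCommGroup K] [InnerProductSpace ℂ K] [CompleteSpace K]
    (A Z : K →L[ℂ] H) (hA : ‖A‖ < 1) (hZ : ‖Z‖ < 1)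
    (BK : K →L[ℂ] K)
    (hBK₁ : BK ∘L (1 - adjoint A ∘L A) = 1) (hBK₂ : (1 - adjoint A ∘L A) ∘L BK = 1)
    (BH : H →L[ℂ] H)
    (hBH₁ : BH ∘L (1 - A ∘L adjoint A) = 1) (hBH₂ : (1 - A ∘L adjoint A) ∘L BH = 1) :
    (Z - A) ∘L BK ∘L (1 - adjoint A ∘L Z) = (1 - Z ∘L adjoint A) ∘L BH ∘L (Z - A) := by
  have key : adjoint A ∘L (1 - A ∘L adjoint A) = (1 - adjoint A ∘L A) ∘L adjoint A := by
    ext x; simp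
  have hcomm : BK ∘L adjoint A = adjoint A ∘L BH := by
    have h := congrArg (fun f => (BK ∘L f) ∘L BH) key
    simp only [comp_assoc] at h
    rw [hBH₂] at h
    rw [← comp_assoc BK (1 - adjoint A ∘L A) (adjoint A ∘L BH), hBK₁] at h
    simp only [one_def, comp_id, id_comp] at h; exact h
  have e1 : (1 : K →L[ℂ] K) - adjoint A ∘L Z
      = (1 - adjoint A ∘L A) - adjoint A ∘L (Z - A) := by ext x; simp
  have e2 : (1 : H →L[ℂ] H) - Z ∘L adjoint A
      = (1 - A ∘L adjoint A) - (Z - A) ∘L adjoint A := by ext x; simp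
  rw [e1, e2]
  simp only [comp_sub, sub_comp, comp_assoc, hBK₁]
  have hcZ : BK ∘L (adjoint A ∘L Z) = adjoint A ∘L (BH ∘L Z) := by
    rw [← comp_assoc, hcomm, comp_assoc]
  have hcA : BK ∘L (adjoint A ∘L A) = adjoint A ∘L (BH ∘L A) := by
    rw [← comp_assoc, hcomm, comp_assoc]
  have hz : A ∘L (adjoint A ∘L (BH ∘L Z)) = BH ∘L Z - Z := by
    have h := congrArg (fun f => f ∘L Z) hBH₂
    simp only [sub_comp, comp_assoc, one_def, id_comp] at h
    rw [eq_sub_iff_add_eq, add_comm]; exact (sub_eq_iff_eq_add.mp h).symm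
  have ha : A ∘L (adjoint A ∘L (BH ∘L A)) = BH ∘L A - A := by
    have h := congrArg (fun f => f ∘L A) hBH₂
    simp only [sub_comp, comp_assoc, one_def, id_comp] at h
    rw [eq_sub_iff_add_eq, add_comm]; exact (sub_eq_iff_eq_add.mp h).symm
  simp only [hcZ, hcA, hz, ha, one_def, comp_id, id_comp]
  abel
end

section
/- Let T be a closed densely-defined operator from a complex Hilbert space H to a finite-dimensional complex Hilbert space K. Then ‖T(I + T*T)^{−1/2}‖² = ‖TT*‖/(1 + ‖TT*‖) < 1; in particular the operator T̂ = (I + T*T)^{−1/2}T* is a bounded operator from K to H with ‖T̂‖ < 1. -/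
open ContinuousLinearMap

/-- Cauchy–Schwarz for the positive form of a positive operator:
`‖A z‖² ≤ ‖A‖ · re⟪A z, z⟫`. -/
lemma aux_sq_le {K : Type*} [NormedAddCommGroup K] [InnerProductSpace ℂ K]
    (A : K →L[ℂ] K)
    (hsym : ∀ x y : K, (inner ℂ (A x) y : ℂ) = inner ℂ x (A y))
    (hpos : ∀ x : K, 0 ≤ (inner ℂ (A x) x : ℂ).re) (z : K) :
    ‖A z‖ ^ 2 ≤ ‖A‖ * (inner ℂ (A z) z : ℂ).re := by
  set p : ℝ := (inner ℂ (A z) z : ℂ).re with hp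
  set q : ℝ := ‖A z‖ ^ 2 with hq
  set r : ℝ := (inner ℂ (A (A z)) (A z) : ℂ).re with hr
  have hq0 : 0 ≤ q := by positivity
  have hp0 : 0 ≤ p := hpos z
  have hr0 : 0 ≤ r := hpos (A z)
  have hAAz : (inner ℂ (A (A z)) z : ℂ) = inner ℂ (A z) (A z) := hsym (A z) z
  have key : ∀ t : ℝ, 0 ≤ p - 2 * t * q + t ^ 2 * r := by
    intro t
    have h := hpos (z - (t : ℂ) • A z)
    rw [map_sub, map_smul, inner_sub_left, inner_sub_right, inner_sub_right,
      inner_smul_left, inner_smul_right, inner_smul_left, inner_smul_right] at h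
    simp only [Complex.conj_ofReal, hAAz] at h
    have hinner : (inner ℂ (A z) (A z) : ℂ).re = q := by
      rw [hq]; simpa using inner_self_eq_norm_sq (𝕜 := ℂ) (A z)
    simp only [Complex.sub_re, Complex.mul_re, Complex.ofReal_re, Complex.ofReal_im,
      zero_mul, sub_zero, Complex.mul_im, zero_add] at h
    rw [hinner] at h
    nlinarith [h]
  have hrq : r ≤ ‖A‖ * q := by
    calc r ≤ ‖A (A z)‖ * ‖A z‖ := by
            simpa using re_inner_le_norm (𝕜 := ℂ) (A (A z)) (A z)
      _ ≤ (‖A‖ * ‖A z‖) * ‖A z‖ := by gcongr; exact A.le_opNorm (A z)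
      _ = ‖A‖ * q := by rw [hq]; ring
  rcases hq0.eq_or_lt with h0 | hqpos
  · rw [← h0]; positivity
  · rcases hr0.eq_or_lt with hr0' | hrpos
    · exfalso
      have hk := key ((p + 1) / (2 * q))
      rw [← hr0'] at hk
      have h2q : (2 : ℝ) * q ≠ 0 := by positivity
      have he : 2 * ((p + 1) / (2 * q)) * q = p + 1 := by field_simp
      rw [he] at hk
      linarith
    · have hk := key (q / r)
      have hrne : r ≠ 0 := ne_of_gt hrpos
      have e1 : (q / r) ^ 2 * r = q ^ 2 / r := by field_simp
      have e2 : 2 * (q / r) * q = 2 * (q ^ 2 / r) := by ring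
      rw [e1, e2] at hk
      have hq2 : q ^ 2 ≤ p * r := by
        have : q ^ 2 / r ≤ p := by linarith
        exact (div_le_iff₀ hrpos).mp this
      have hfin : q * q ≤ (‖A‖ * p) * q := by nlinarith
      exact le_of_mul_le_mul_right (by nlinarith [hfin]) hqpos


/-- A positive operator on a nonzero finite-dimensional space attains its norm
as an eigenvalue. -/
lemma aux_eigen {K : Type*} [NormedAddCommGroup K] [InnerProductSpace ℂ K]
    [FiniteDimensional ℂ K] (A : K →L[ℂ] K)
    (hsym : ∀ x y : K, (inner ℂ (A x) y : ℂ) = inner ℂ x (A y))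
    (hpos : ∀ x : K, 0 ≤ (inner ℂ (A x) x : ℂ).re) (ha : 0 < ‖A‖) :
    ∃ w : K, w ≠ 0 ∧ A w = (‖A‖ : ℂ) • w := by
  set a : ℝ := ‖A‖ with haA
  have hA0 : A ≠ 0 := by intro h; rw [haA, h, norm_zero] at ha; exact lt_irrefl 0 ha
  obtain ⟨v, hv⟩ : ∃ v, A v ≠ 0 := by
    by_contra h; push_neg at h
    exact hA0 (ContinuousLinearMap.ext fun x => by simp [h x])
  have hnt : Nontrivial K := ⟨v, 0, fun h => hv (by rw [h]; simp)⟩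
  have hsn : (Metric.sphere (0 : K) 1).Nonempty :=
    NormedSpace.sphere_nonempty.mpr zero_le_one
  obtain ⟨z, hzs, hmax⟩ := (isCompact_sphere (0 : K) 1).exists_isMaxOn hsn
    ((A.continuous.norm).continuousOn)
  have hz1 : ‖z‖ = 1 := by simpa using hzs
  -- ‖A z‖ = ‖A‖
  have hnorm : ‖A z‖ = a := by
    refine le_antisymm (by simpa [hz1] using A.le_opNorm z) ?_
    refine A.opNorm_le_bound (norm_nonneg _) fun x => ?_
    rcases eq_or_ne x 0 with rfl | hx
    · simp
    · have hxn : ‖x‖ ≠ 0 := norm_ne_zero_iff.mpr hx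
      have hmem : ((‖x‖⁻¹ : ℝ) : ℂ) • x ∈ Metric.sphere (0 : K) 1 := by
        simp [norm_smul, hxn]
      have h1 : ‖A (((‖x‖⁻¹ : ℝ) : ℂ) • x)‖ ≤ ‖A z‖ := hmax hmem
      rw [map_smul, norm_smul] at h1
      have h2 : ‖x‖⁻¹ * ‖A x‖ ≤ ‖A z‖ := by
        simpa [abs_of_nonneg (inv_nonneg.mpr (norm_nonneg x))] using h1
      calc ‖A x‖ = ‖x‖ * (‖x‖⁻¹ * ‖A x‖) := by field_simp
        _ ≤ ‖x‖ * ‖A z‖ := mul_le_mul_of_nonneg_left h2 (norm_nonneg x)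
        _ = ‖A z‖ * ‖x‖ := mul_comm _ _
  -- A² z = a² z
  have hsq : A (A z) = ((a ^ 2 : ℝ) : ℂ) • z := by
    have hre : (RCLike.re (inner ℂ (A (A z)) (((a ^ 2 : ℝ) : ℂ) • z) : ℂ)) = a ^ 2 * a ^ 2 := by
      rw [inner_smul_right, hsym (A z) z, inner_self_eq_norm_sq_to_K, hnorm]
      norm_cast
      simp only [Complex.coe_algebraMap, ← Complex.ofReal_mul, RCLike.re_to_complex,
        Complex.ofReal_re]
    have hb : ‖A (A z)‖ ≤ a * a := by
      have := A.le_opNorm (A z); rw [hnorm] at this; simpa [haA] using this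
    have hns : ‖((a ^ 2 : ℝ) : ℂ) • z‖ = a ^ 2 := by
      rw [norm_smul, hz1]
      simp [abs_of_nonneg (sq_nonneg a)]
    have key : ‖A (A z) - ((a ^ 2 : ℝ) : ℂ) • z‖ ^ 2 ≤ 0 := by
      rw [norm_sub_sq (𝕜 := ℂ), hre, hns]
      nlinarith [hb, norm_nonneg (A (A z)), ha.le]
    have h0 : ‖A (A z) - ((a ^ 2 : ℝ) : ℂ) • z‖ = 0 := by
      nlinarith [sq_nonneg ‖A (A z) - ((a ^ 2 : ℝ) : ℂ) • z‖, norm_nonneg (A (A z) - ((a ^ 2 : ℝ) : ℂ) • z)]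
    exact sub_eq_zero.mp (norm_eq_zero.mp h0)
  -- the eigenvector
  refine ⟨A z + (a : ℂ) • z, ?_, ?_⟩
  · intro h0
    have hre : (RCLike.re (inner ℂ (A z + (a : ℂ) • z) z : ℂ)) = 0 := by
      rw [h0]; simp
    rw [inner_add_left, inner_smul_left, inner_self_eq_norm_sq_to_K, hz1] at hre
    simp only [map_add, Complex.conj_ofReal] at hre
    norm_cast at hre
    norm_num at hre
    have h5 := hpos z
    linarith
  · rw [map_add, map_smul, hsq]
    push_cast
    module


set_option maxHeartbeats 1000000 in
/-- Let `T : H →ₗ. K` be closed and densely defined with `K`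
finite-dimensional.  With `B = (I + T*T)⁻¹`, `S = (I + T*T)^{−1/2}` its positive square root,
`A = TT*` (bounded on `K`), `C = T(I + T*T)^{−1/2}` and `T̂ = (I + T*T)^{−1/2}T*`, one has
`‖C‖² = ‖TT*‖/(1 + ‖TT*‖) < 1`; in particular `‖T̂‖ < 1`. -/
theorem norm_sq_eq_and_hat_lt_one
    {H K : Type*} [NormedAddCommGroup H] [InnerProductSpace ℂ H] [CompleteSpace H]
    [NormedAddCommGroup K] [InnerProductSpace ℂ K] [FiniteDimensional ℂ K]
    (T : H →ₗ.[ℂ] K) (hd : Dense (T.domain : Set H)) (hc : T.IsClosed)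
    (B : H →L[ℂ] H) (hB : B.IsPositive)
    (hBright : ∀ u : H, ∃ (hx : B u ∈ T.domain) (hy : T ⟨B u, hx⟩ ∈ T.adjoint.domain),
      B u + T.adjoint ⟨T ⟨B u, hx⟩, hy⟩ = u)
    (hBleft : ∀ (x : H) (hx : x ∈ T.domain) (hy : T ⟨x, hx⟩ ∈ T.adjoint.domain),
      B (x + T.adjoint ⟨T ⟨x, hx⟩, hy⟩) = x)
    (S : H →L[ℂ] H) (hS : S.IsPositive) (hS2 : S ∘L S = B)
    (A : K →L[ℂ] K)
    (hA : ∀ y : K, ∃ (hy : y ∈ T.adjoint.domain) (h2 : T.adjoint ⟨y, hy⟩ ∈ T.domain),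
      A y = T ⟨T.adjoint ⟨y, hy⟩, h2⟩)
    (C : H →L[ℂ] K) (hC : ∀ x : H, ∃ hx : S x ∈ T.domain, C x = T ⟨S x, hx⟩)
    (That : K →L[ℂ] H)
    (hThat : ∀ y : K, ∃ hy : y ∈ T.adjoint.domain, That y = S (T.adjoint ⟨y, hy⟩)) :
    ‖C‖ ^ 2 = ‖A‖ / (1 + ‖A‖) ∧ ‖C‖ ^ 2 < 1 ∧ ‖That‖ < 1 := by
  classical
  have fa : ∀ (u : T.domain) (v : T.adjoint.domain),
      (inner ℂ (T u) (v : K) : ℂ) = inner ℂ (u : H) (T.adjoint v) :=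
    (T.adjoint_isFormalAdjoint hd).symm
  have faT : ∀ (v : T.adjoint.domain) (u : T.domain),
      (inner ℂ (T.adjoint v) (u : H) : ℂ) = inner ℂ (v : K) (T u) :=
    T.adjoint_isFormalAdjoint hd
  have hSsa : adjoint S = S := hS.isSelfAdjoint.adjoint_eq
  have hSinner : ∀ u v : H, (inner ℂ (S u) v : ℂ) = inner ℂ u (S v) := fun u v => by
    conv_lhs => rw [← hSsa]
    exact adjoint_inner_left S v u
  -- `That` is the adjoint of `C`
  have hadj : That = adjoint C := by
    rw [eq_adjoint_iff]
    intro y x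
    obtain ⟨hy, hTy⟩ := hThat y
    obtain ⟨hx, hCx⟩ := hC x
    rw [hTy, hCx]
    calc (inner ℂ (S (T.adjoint ⟨y, hy⟩)) x : ℂ)
        = inner ℂ (T.adjoint ⟨y, hy⟩ : H) (S x) := hSinner _ _
      _ = inner ℂ y (T ⟨S x, hx⟩) := faT ⟨y, hy⟩ ⟨S x, hx⟩
  have hnormThat : ‖That‖ = ‖C‖ := by rw [hadj]; exact adjoint.norm_map C
  set D : K →L[ℂ] K := C ∘L That with hDdef
  have hDnorm : ‖D‖ = ‖C‖ ^ 2 := by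
    have h := norm_adjoint_comp_self (adjoint C)
    rw [adjoint_adjoint] at h
    rw [hDdef, hadj, h, adjoint.norm_map C]; ring
  -- the key algebraic identity `D (y + A y) = A y`
  have hDA : ∀ y : K, D (y + A y) = A y := by
    intro y
    obtain ⟨hy1, hy2, hAy⟩ := hA y
    obtain ⟨hy1', -, -⟩ := hA (A y)
    obtain ⟨hm, hTsum⟩ := hThat (y + A y)
    obtain ⟨u, hu⟩ : ∃ u : H, T.adjoint ⟨y + A y, hm⟩ = u := ⟨_, rfl⟩
    rw [hu] at hTsum
    obtain ⟨hSu, hCSu⟩ := hC (S u)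
    have hSS : S (S u) = B u := by rw [← hS2]; rfl
    have husplit : u = T.adjoint ⟨y, hy1⟩ + T.adjoint ⟨A y, hy1'⟩ := by
      rw [← hu, ← T.adjoint.map_add ⟨y, hy1⟩ ⟨A y, hy1'⟩]
      exact congrArg (fun t => T.adjoint t) (Subtype.ext rfl)
    have hmem2 : T ⟨T.adjoint ⟨y, hy1⟩, hy2⟩ ∈ T.adjoint.domain := by
      rw [← hAy]; exact hy1'
    have hAy' : T.adjoint ⟨A y, hy1'⟩ =
        T.adjoint ⟨T ⟨T.adjoint ⟨y, hy1⟩, hy2⟩, hmem2⟩ := by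
      congr 1
      exact Subtype.ext hAy
    have hBu : B u = T.adjoint ⟨y, hy1⟩ := by
      rw [husplit, hAy']
      exact hBleft (T.adjoint ⟨y, hy1⟩) hy2 hmem2
    have hval : (⟨S (S u), hSu⟩ : T.domain) = ⟨T.adjoint ⟨y, hy1⟩, hy2⟩ :=
      Subtype.ext (hSS.trans hBu)
    calc D (y + A y) = C (That (y + A y)) := rfl
      _ = C (S u) := by rw [hTsum]
      _ = T ⟨S (S u), hSu⟩ := hCSu
      _ = T ⟨T.adjoint ⟨y, hy1⟩, hy2⟩ := congrArg _ hval
      _ = A y := hAy.symm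
  -- `A` is symmetric and positive
  have hAsym : ∀ x y : K, (inner ℂ (A x) y : ℂ) = inner ℂ x (A y) := by
    intro x y
    obtain ⟨hx1, hx2, hAx⟩ := hA x
    obtain ⟨hy1, hy2, hAy⟩ := hA y
    rw [hAx, hAy]
    calc (inner ℂ (T ⟨T.adjoint ⟨x, hx1⟩, hx2⟩) y : ℂ)
        = inner ℂ (T.adjoint ⟨x, hx1⟩ : H) (T.adjoint ⟨y, hy1⟩) :=
          fa ⟨T.adjoint ⟨x, hx1⟩, hx2⟩ ⟨y, hy1⟩
      _ = inner ℂ x (T ⟨T.adjoint ⟨y, hy1⟩, hy2⟩) :=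
          faT ⟨x, hx1⟩ ⟨T.adjoint ⟨y, hy1⟩, hy2⟩
  have hApos : ∀ x : K, 0 ≤ (inner ℂ (A x) x : ℂ).re := by
    intro x
    obtain ⟨hx1, hx2, hAx⟩ := hA x
    rw [hAx]
    have h := fa ⟨T.adjoint ⟨x, hx1⟩, hx2⟩ ⟨x, hx1⟩
    rw [h]
    simpa using inner_self_nonneg (𝕜 := ℂ) (x := (T.adjoint ⟨x, hx1⟩ : H))
  set a : ℝ := ‖A‖ with ha
  have ha0 : 0 ≤ a := norm_nonneg A
  have ha1 : (0 : ℝ) < 1 + a := by linarith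
  -- surjectivity of `1 + A`
  have hsurj : ∀ w : K, ∃ z : K, z + A z = w := by
    have hinj : Function.Injective ((1 : K →L[ℂ] K) + A) := by
      intro x1 x2 hx
      have h0 : x1 - x2 + A (x1 - x2) = 0 := by
        have : ((1 : K →L[ℂ] K) + A) (x1 - x2) = 0 := by
          rw [map_sub, hx, sub_self]
        simpa [ContinuousLinearMap.add_apply] using this
      by_contra hne
      have hzne : x1 - x2 ≠ 0 := sub_ne_zero.mpr hne
      have h1 : (inner ℂ (x1 - x2 + A (x1 - x2)) (x1 - x2) : ℂ).re = 0 := by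
        rw [h0]; simp
      rw [inner_add_left] at h1
      have h2 : (inner ℂ (x1 - x2) (x1 - x2) : ℂ).re = ‖x1 - x2‖ ^ 2 := by
        simpa using inner_self_eq_norm_sq (𝕜 := ℂ) (x1 - x2)
      have h3 := hApos (x1 - x2)
      have h4 : (0:ℝ) < ‖x1 - x2‖ ^ 2 := pow_pos (norm_pos_iff.mpr hzne) 2
      simp only [Complex.add_re] at h1
      rw [h2] at h1
      linarith
    intro w
    obtain ⟨z, hz⟩ := LinearMap.injective_iff_surjective.mp hinj w
    exact ⟨z, by simpa [ContinuousLinearMap.add_apply] using hz⟩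
  -- upper bound for ‖D‖
  have hub : ‖D‖ ≤ a / (1 + a) := by
    refine D.opNorm_le_bound (by positivity) fun w => ?_
    obtain ⟨z, hz⟩ := hsurj w
    rw [← hz, hDA z]
    set n : ℝ := ‖z‖ with hn
    set p : ℝ := (inner ℂ (A z) z : ℂ).re with hp
    set q : ℝ := ‖A z‖ with hq
    have hp0 : 0 ≤ p := hApos z
    have hq0 : 0 ≤ q := norm_nonneg _
    have hn0 : 0 ≤ n := norm_nonneg _
    have hqp : q ^ 2 ≤ a * p := aux_sq_le A hAsym hApos z
    have hqn : q ≤ a * n := A.le_opNorm z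
    have hpqn : p ≤ q * n := by
      have := re_inner_le_norm (𝕜 := ℂ) (A z) z
      simpa [hp, hq, hn] using this
    have hW : ‖z + A z‖ ^ 2 = n ^ 2 + 2 * p + q ^ 2 := by
      rw [norm_add_sq (𝕜 := ℂ)]
      have : RCLike.re (inner ℂ z (A z) : ℂ) = p := by
        rw [hp]; exact inner_re_symm (𝕜 := ℂ) z (A z)
      rw [this]
    set W : ℝ := ‖z + A z‖ with hWdef
    have hW0 : 0 ≤ W := norm_nonneg _
    have hsq : (q * (1 + a)) ^ 2 ≤ (a * W) ^ 2 := by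
      have e : (a * W) ^ 2 = a ^ 2 * (n ^ 2 + 2 * p + q ^ 2) := by
        rw [mul_pow, hW]
      rw [e]
      nlinarith [mul_le_mul_of_nonneg_left hqp (by linarith : (0:ℝ) ≤ 1 + 2 * a),
        mul_le_mul_of_nonneg_left hpqn (mul_nonneg ha0 ha0),
        mul_le_mul_of_nonneg_left hqn (mul_nonneg ha0 hn0)]
    have hle : q * (1 + a) ≤ a * W := by
      have h1 := Real.sqrt_le_sqrt hsq
      rwa [Real.sqrt_sq (by positivity), Real.sqrt_sq (by positivity)] at h1
    rw [div_mul_eq_mul_div, le_div_iff₀ ha1]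
    linarith [hle]
  -- lower bound for ‖D‖
  have hlb : a / (1 + a) ≤ ‖D‖ := by
    rcases ha0.eq_or_lt with h0 | hapos
    · have he : (0:ℝ) / (1 + 0) = 0 := by norm_num
      rw [← h0, he]; exact norm_nonneg D
    · obtain ⟨w, hw0, hww⟩ := aux_eigen A hAsym hApos (by rwa [← ha])
      rw [← ha] at hww
      have hkey : D (w + A w) = A w := hDA w
      have hsum : w + A w = (((1 + a : ℝ)) : ℂ) • w := by
        rw [hww]; push_cast; module
      have hDw : (((1 + a : ℝ)) : ℂ) • D w = (a : ℂ) • w := by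
        rw [← map_smul, ← hsum, hkey, hww]
      have hnorms : (1 + a) * ‖D w‖ = a * ‖w‖ := by
        have h1 : ‖(((1 + a : ℝ)) : ℂ) • D w‖ = (1 + a) * ‖D w‖ := by
          rw [norm_smul, Complex.norm_real, Real.norm_eq_abs, abs_of_pos ha1]
        have h2 : ‖(a : ℂ) • w‖ = a * ‖w‖ := by
          rw [norm_smul, Complex.norm_real, Real.norm_eq_abs, abs_of_pos hapos]
        rw [← h1, ← h2, hDw]
      have hwpos : (0:ℝ) < ‖w‖ := norm_pos_iff.mpr hw0
      have hDb : ‖D w‖ ≤ ‖D‖ * ‖w‖ := D.le_opNorm w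
      rw [div_le_iff₀ ha1]
      have : a * ‖w‖ ≤ (‖D‖ * (1 + a)) * ‖w‖ := by
        rw [← hnorms]
        calc (1 + a) * ‖D w‖ ≤ (1 + a) * (‖D‖ * ‖w‖) :=
              mul_le_mul_of_nonneg_left hDb (by linarith)
          _ = (‖D‖ * (1 + a)) * ‖w‖ := by ring
      exact le_of_mul_le_mul_right this hwpos
  have hDval : ‖D‖ = a / (1 + a) := le_antisymm hub hlb
  have h1 : ‖C‖ ^ 2 = a / (1 + a) := by rw [← hDnorm, hDval]
  have hlt : a / (1 + a) < 1 := by rw [div_lt_one ha1]; linarith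
  refine ⟨h1, by rw [h1]; exact hlt, ?_⟩
  rw [hnormThat]
  nlinarith [norm_nonneg C, h1, hlt]
end

section
/- Let H, K be complex Hilbert spaces and let A : K → H be a bounded operator with ‖A‖ < 1. Then ker(I − A*A) = {0}, and consequently (I − A*A)^{−1/2} is a (possibly unbounded) densely-defined self-adjoint operator; moreover A₀ = (I − A*A)^{−1/2}A* is a closed densely-defined operator from H to K satisfying (I + A₀*A₀)^{−1/2}A₀* = A. -/
open ContinuousLinearMap Polynomial

section AuxCfc

variable {E : Type*} [NormedAddCommGroup E] [InnerProductSpace ℂ E] [CompleteSpace E]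

/-- If `x` commutes with a selfadjoint operator `d`, then `x` commutes with `cfc f d`. -/
lemma commute_cfc_of_commute (x d : E →L[ℂ] E) (hd : IsSelfAdjoint d) (h : Commute x d)
    (f : ℝ → ℝ) : Commute x (cfc f d) := by
  by_cases hf : ContinuousOn f (spectrum ℝ d)
  · rw [cfc_apply f d hd hf]
    set Φ : C(spectrum ℝ d, ℝ) →⋆ₐ[ℝ] (E →L[ℂ] E) := cfcHom (R := ℝ) hd with hΦ
    have hpolyX : ∀ p : ℝ[X],
        Commute x (Φ (Polynomial.toContinuousMapOnAlgHom (spectrum ℝ d) p)) := by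
      intro p
      have hX : Φ (Polynomial.toContinuousMapOnAlgHom (spectrum ℝ d) X) = d := by
        have : (Polynomial.toContinuousMapOnAlgHom (spectrum ℝ d) X)
            = (ContinuousMap.id ℝ).restrict (spectrum ℝ d) := by
          ext z; simp
        rw [this]; exact cfcHom_id hd
      induction p using Polynomial.induction_on with
      | C r =>
          have hCr : (C r : Polynomial ℝ) = algebraMap ℝ (Polynomial ℝ) r := rfl
          rw [hCr, AlgHomClass.commutes, AlgHomClass.commutes]
          exact (Algebra.commutes r x).symm
      | add p q hp hq => simpa [map_add] using hp.add_right hq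
      | monomial n r hmon =>
          have : (C r * X ^ (n + 1)) = (C r * X ^ n) * X := by ring
          rw [this, map_mul, map_mul]
          refine hmon.mul_right ?_
          rw [hX]
          exact h
    have hclosed : IsClosed {g : C(spectrum ℝ d, ℝ) | Commute x (Φ g)} := by
      have : {g : C(spectrum ℝ d, ℝ) | Commute x (Φ g)}
          = (⇑Φ) ⁻¹' {y | x * y = y * x} := rfl
      rw [this]
      exact (isClosed_eq (continuous_mul_left x) (continuous_mul_right x)).preimage
        (cfcHom_isClosedEmbedding (R := ℝ) hd).continuous
    have hpoly : ((polynomialFunctions (spectrum ℝ d)) : Set C(spectrum ℝ d, ℝ))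
        ⊆ {g : C(spectrum ℝ d, ℝ) | Commute x (Φ g)} := by
      rintro g ⟨p, -, rfl⟩
      exact hpolyX p
    have huniv : closure ((polynomialFunctions (spectrum ℝ d)) : Set C(spectrum ℝ d, ℝ))
        = Set.univ := by
      rw [← Subalgebra.topologicalClosure_coe, polynomialFunctions.topologicalClosure]
      rfl
    have := hclosed.closure_subset_iff.mpr hpoly
    rw [huniv] at this
    exact this (Set.mem_univ _)
  · rw [cfc_apply_of_not_continuousOn d hf]
    exact Commute.zero_right x

/-- If `x` commutes with the square of a positive operator `b`, it commutes with `b`. -/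
lemma commute_of_commute_sq (x b : E →L[ℂ] E) (hb : b.IsPositive) (h : Commute x (b * b)) :
    Commute x b := by
  have hbsa : IsSelfAdjoint b := hb.isSelfAdjoint
  have hbb : IsSelfAdjoint (b * b) := by
    rw [IsSelfAdjoint, star_mul, hbsa.star_eq]
  have hbnn : (0 : E →L[ℂ] E) ≤ b := (nonneg_iff_isPositive b).2 hb
  have key : cfc Real.sqrt (b * b) = b := by
    have h1 : b * b = cfc (fun t : ℝ => t * t) b := by
      rw [cfc_mul (fun t : ℝ => t) (fun t : ℝ => t) b, cfc_id' ℝ b]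
    calc cfc Real.sqrt (b * b) = cfc Real.sqrt (cfc (fun t : ℝ => t * t) b) := by rw [← h1]
      _ = cfc (Real.sqrt ∘ fun t : ℝ => t * t) b := by
          rw [cfc_comp Real.sqrt (fun t : ℝ => t * t) b]
      _ = cfc (id : ℝ → ℝ) b := by
          refine cfc_congr fun t ht => ?_
          have ht0 : (0:ℝ) ≤ t := spectrum_nonneg_of_nonneg hbnn ht
          simp [Real.sqrt_mul_self ht0]
      _ = b := cfc_id ℝ b
  have := commute_cfc_of_commute x (b * b) hbb h Real.sqrt
  rwa [key] at this

/-- Intertwining: if `S² A = A Q²` with `S, Q` positive, then `S A = A Q`. -/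
lemma intertwine_of_sq {H K : Type*} [NormedAddCommGroup H] [InnerProductSpace ℂ H]
    [CompleteSpace H] [NormedAddCommGroup K] [InnerProductSpace ℂ K] [CompleteSpace K]
    (A : K →L[ℂ] H) (S : H →L[ℂ] H) (Q : K →L[ℂ] K) (hS : S.IsPositive) (hQ : Q.IsPositive)
    (h : S ∘L (S ∘L A) = A ∘L (Q ∘L Q)) : S ∘L A = A ∘L Q := by
  set E := WithLp 2 (H × K) with hE
  let e : E ≃L[ℂ] H × K := WithLp.prodContinuousLinearEquiv 2 ℂ H K
  let D : E →L[ℂ] E := (e.symm : H × K →L[ℂ] E) ∘L (S.prodMap Q) ∘L (e : E →L[ℂ] H × K)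
  let V : E →L[ℂ] E := (e.symm : H × K →L[ℂ] E) ∘L
    ((A.comp (ContinuousLinearMap.snd ℂ H K)).prod 0) ∘L (e : E →L[ℂ] H × K)
  have hDapp : ∀ z : E, D z = (WithLp.equiv 2 (H × K)).symm (S z.ofLp.1, Q z.ofLp.2) := fun z => rfl
  have hVapp : ∀ z : E, V z = (WithLp.equiv 2 (H × K)).symm (A z.ofLp.2, 0) := fun z => rfl
  have hD : D.IsPositive := by
    rw [isPositive_iff_complex]
    intro z
    have h1 : (inner ℂ (D z) z : ℂ) = inner ℂ (S z.ofLp.1) z.ofLp.1 + inner ℂ (Q z.ofLp.2) z.ofLp.2 := by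
      rw [hDapp z, WithLp.prod_inner_apply]
      rfl
    obtain ⟨hS1, hS2⟩ := (isPositive_iff_complex S).mp hS z.ofLp.1
    obtain ⟨hQ1, hQ2⟩ := (isPositive_iff_complex Q).mp hQ z.ofLp.2
    constructor
    · rw [h1, map_add, Complex.ofReal_add, hS1, hQ1]
    · rw [h1, map_add]
      exact add_nonneg hS2 hQ2
  have hcomm2 : Commute V (D * D) := by
    ext z
    have : S (S (A z.ofLp.2)) = A (Q (Q z.ofLp.2)) := by
      have := ContinuousLinearMap.ext_iff.mp h z.ofLp.2
      simpa using this
    simp only [ContinuousLinearMap.mul_apply, hDapp, hVapp]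
    simp [this]
    exact congrArg (fun a : H => WithLp.toLp 2 (a, (0 : K))) this.symm
  have hcomm : Commute V D := commute_of_commute_sq V D hD hcomm2
  ext y
  have := congrFun (congrArg DFunLike.coe hcomm.eq) ((WithLp.equiv 2 (H × K)).symm (0, y))
  simp only [ContinuousLinearMap.mul_apply, hDapp, hVapp] at this
  have h2 := congrArg (fun w : E => w.ofLp.1) this
  simp only [ContinuousLinearMap.comp_apply] at h2 ⊢
  simpa using h2.symm

end AuxCfc

set_option maxHeartbeats 1600000 in
/-- Let `A : K →L H` with `‖A‖ < 1`.  Then `ker (I − A*A) = 0`, the domain of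
`(I − A*A)^{−1/2}` (the range of `Q = (I − A*A)^{1/2}`) is dense, and the operator
`A₀ = (I − A*A)^{−1/2}A*` (characterized by its graph `{(x, y) : Q y = A* x}`) is a closed
densely-defined operator from `H` to `K` satisfying `(I + A₀*A₀)^{−1/2}A₀* = A`, where
`(I + A₀*A₀)^{−1/2}` is the positive square root `S₀` of the inverse `B₀` of `I + A₀*A₀`. -/
theorem ker_trivial_and_hat_eq
    {H K : Type*} [NormedAddCommGroup H] [InnerProductSpace ℂ H] [CompleteSpace H]
    [NormedAddCommGroup K] [InnerProductSpace ℂ K] [CompleteSpace K]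
    (A : K →L[ℂ] H) (hA : ‖A‖ < 1)
    (Q : K →L[ℂ] K) (hQ : Q.IsPositive) (hQ2 : Q ∘L Q = 1 - adjoint A ∘L A)
    (A₀ : H →ₗ.[ℂ] K)
    (hA₀ : ∀ (x : H) (y : K), (x, y) ∈ A₀.graph ↔ Q y = adjoint A x) :
    LinearMap.ker ((1 - adjoint A ∘L A : K →L[ℂ] K) : K →ₗ[ℂ] K) = ⊥ ∧
    Dense (Set.range Q : Set K) ∧
    Dense (A₀.domain : Set H) ∧
    A₀.IsClosed ∧
    (∀ B₀ : H →L[ℂ] H, B₀.IsPositive →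
      (∀ u : H, ∃ (hx : B₀ u ∈ A₀.domain) (hy : A₀ ⟨B₀ u, hx⟩ ∈ A₀.adjoint.domain),
        B₀ u + A₀.adjoint ⟨A₀ ⟨B₀ u, hx⟩, hy⟩ = u) →
      (∀ (x : H) (hx : x ∈ A₀.domain) (hy : A₀ ⟨x, hx⟩ ∈ A₀.adjoint.domain),
        B₀ (x + A₀.adjoint ⟨A₀ ⟨x, hx⟩, hy⟩) = x) →
      ∀ S₀ : H →L[ℂ] H, S₀.IsPositive → S₀ ∘L S₀ = B₀ →
        ∀ y : K, ∃ hy : y ∈ A₀.adjoint.domain, S₀ (A₀.adjoint ⟨y, hy⟩) = A y) := by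
  -- Part 1 : trivial kernel
  have hker : LinearMap.ker ((1 - adjoint A ∘L A : K →L[ℂ] K) : K →ₗ[ℂ] K) = ⊥ := by
    rw [Submodule.eq_bot_iff]
    intro x hx
    have hx' : x - adjoint A (A x) = 0 := by
      simpa [ContinuousLinearMap.sub_apply] using LinearMap.mem_ker.mp hx
    by_contra hx0
    have h1 : x = (adjoint A ∘L A) x := by
      rw [ContinuousLinearMap.comp_apply, ← sub_eq_zero]
      exact hx'
    have h2 : ‖x‖ ≤ ‖A‖ * ‖A‖ * ‖x‖ := by
      calc ‖x‖ = ‖((adjoint A).comp A) x‖ := by rw [← h1]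
        _ ≤ ‖(adjoint A).comp A‖ * ‖x‖ := le_opNorm _ _
        _ = ‖A‖ * ‖A‖ * ‖x‖ := by rw [norm_adjoint_comp_self]
    have hxpos : 0 < ‖x‖ := norm_pos_iff.mpr hx0
    have hA2 : ‖A‖ * ‖A‖ < 1 := by nlinarith [norm_nonneg A]
    nlinarith [mul_lt_mul_of_pos_right hA2 hxpos]
  -- injectivity of Q
  have hQinj : ∀ z : K, Q z = 0 → z = 0 := by
    intro z hz
    have h0 : (1 - adjoint A ∘L A) z = 0 := by
      rw [← hQ2, ContinuousLinearMap.comp_apply, hz, map_zero]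
    exact (Submodule.eq_bot_iff _).mp hker z (LinearMap.mem_ker.mpr h0)
  have hQsym : (Q : K →ₗ[ℂ] K).IsSymmetric :=
    isSelfAdjoint_iff_isSymmetric.mp hQ.isSelfAdjoint
  -- Part 2 : dense range of Q
  have hdenseQ : Dense (Set.range Q : Set K) := by
    have hrange : (Set.range Q : Set K) = ((LinearMap.range (Q : K →ₗ[ℂ] K) : Submodule ℂ K) : Set K) := by
      simp [LinearMap.coe_range]
    rw [hrange, Submodule.dense_iff_topologicalClosure_eq_top,
      Submodule.topologicalClosure_eq_top_iff, Submodule.eq_bot_iff]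
    intro v hv
    have h0 : (inner ℂ (Q (Q v)) v : ℂ) = 0 :=
      (Submodule.mem_orthogonal _ v).mp hv _ (LinearMap.mem_range_self _ (Q v))
    have h1 : (inner ℂ (Q v) (Q v) : ℂ) = 0 := by
      have h := hQsym (Q v) v
      exact h.symm.trans h0
    exact hQinj v (inner_self_eq_zero.mp h1)
  -- the bounded operator `T = Q A* (1 - A A*)⁻¹`, which is `A₀`
  have hAA : ‖A ∘L adjoint A‖ < 1 := by
    have h1 : ‖A ∘L adjoint A‖ ≤ ‖A‖ * ‖adjoint A‖ := opNorm_comp_le _ _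
    have h2 : ‖adjoint A‖ = ‖A‖ := LinearIsometryEquiv.norm_map adjoint A
    nlinarith [norm_nonneg A]
  set u : (H →L[ℂ] H)ˣ := Units.oneSub (A ∘L adjoint A) hAA with hu_def
  have hu : (u : H →L[ℂ] H) = 1 - A ∘L adjoint A := rfl
  have huinv₁ : ∀ w : H, (↑u⁻¹ : H →L[ℂ] H) (w - A (adjoint A w)) = w := by
    intro w
    have h1 := ContinuousLinearMap.ext_iff.mp u.inv_mul w
    simpa [ContinuousLinearMap.mul_apply, hu] using h1
  have huinv₂ : ∀ w : H, (↑u⁻¹ : H →L[ℂ] H) w - A (adjoint A ((↑u⁻¹ : H →L[ℂ] H) w)) = w := by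
    intro w
    have h1 := ContinuousLinearMap.ext_iff.mp u.mul_inv w
    simpa [ContinuousLinearMap.mul_apply, hu] using h1
  set T : H →L[ℂ] K := Q ∘L ((adjoint A) ∘L (↑u⁻¹ : H →L[ℂ] H)) with hT_def
  have hQQ : ∀ z : K, Q (Q z) = z - adjoint A (A z) := by
    intro z
    have := ContinuousLinearMap.ext_iff.mp hQ2 z
    simpa using this
  have hQT : ∀ x : H, Q (T x) = adjoint A x := by
    intro x
    have h1 : Q (T x) = Q (Q (adjoint A ((↑u⁻¹ : H →L[ℂ] H) x))) := rfl
    rw [h1, hQQ]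
    rw [← map_sub (adjoint A)]
    rw [huinv₂ x]
  -- A₀ is everywhere defined and equals T
  have hmemdom : ∀ x : H, x ∈ A₀.domain := by
    intro x
    have hg : (x, T x) ∈ A₀.graph := (hA₀ x (T x)).mpr (hQT x)
    rcases A₀.mem_graph_iff.mp hg with ⟨z, hz1, -⟩
    rw [show (x, T x).1 = x from rfl] at hz1
    rw [← hz1]
    exact z.2
  have hval : ∀ (x : H) (hx : x ∈ A₀.domain), A₀ ⟨x, hx⟩ = T x := by
    intro x hx
    have hg1 : (x, A₀ ⟨x, hx⟩) ∈ A₀.graph := A₀.mem_graph ⟨x, hx⟩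
    have e1 : Q (A₀ ⟨x, hx⟩) = adjoint A x := (hA₀ _ _).mp hg1
    have e2 : Q (A₀ ⟨x, hx⟩ - T x) = 0 := by
      rw [map_sub, e1, hQT, sub_self]
    have := hQinj _ e2
    exact sub_eq_zero.mp this
  -- Part 3 : dense domain
  have hdense : Dense (A₀.domain : Set H) := by
    have : (A₀.domain : Set H) = Set.univ := Set.eq_univ_of_forall hmemdom
    rw [this]
    exact dense_univ
  -- Part 4 : closed graph
  have hclosed : A₀.IsClosed := by
    show IsClosed (A₀.graph : Set (H × K))
    have hgraph : (A₀.graph : Set (H × K)) =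
        (fun p : H × K => Q p.2 - adjoint A p.1) ⁻¹' {0} := by
      ext p
      rw [SetLike.mem_coe, show p = (p.1, p.2) from rfl, hA₀ p.1 p.2]
      simp [sub_eq_zero]
    rw [hgraph]
    exact isClosed_singleton.preimage
      ((Q.continuous.comp continuous_snd).sub ((adjoint A).continuous.comp continuous_fst))
  -- adjoint facts
  have hadjmem : ∀ y : K, y ∈ A₀.adjoint.domain := by
    intro y
    refine LinearPMap.mem_adjoint_domain_of_exists _ ⟨adjoint T y, fun x => ?_⟩
    rw [adjoint_inner_left, hval x x.2]
  have hadjval : ∀ (y : K) (hy : y ∈ A₀.adjoint.domain),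
      A₀.adjoint ⟨y, hy⟩ = adjoint T y := by
    intro y hy
    refine LinearPMap.adjoint_apply_eq hdense ⟨y, hy⟩ fun x => ?_
    rw [adjoint_inner_left, hval x x.2]
  refine ⟨hker, hdenseQ, hdense, hclosed, ?_⟩
  intro B₀ hB₀pos hB1 hB2 S₀ hS₀pos hS₀sq y
  -- compute adjoint of T
  have hQadj : adjoint Q = Q := isSelfAdjoint_iff'.mp hQ.isSelfAdjoint
  have hWadj : adjoint ((u : H →L[ℂ] H)) = (u : H →L[ℂ] H) := by
    rw [hu, map_sub, adjoint_comp, adjoint_adjoint]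
    congr 1
    rw [show (1 : H →L[ℂ] H) = ContinuousLinearMap.id ℂ H from rfl, adjoint_id]
  have huadj : adjoint (↑u⁻¹ : H →L[ℂ] H) = (↑u⁻¹ : H →L[ℂ] H) := by
    have h2 : adjoint ((↑u : H →L[ℂ] H) * (↑u⁻¹ : H →L[ℂ] H)) = 1 := by
      rw [u.mul_inv]
      rw [show (1 : H →L[ℂ] H) = ContinuousLinearMap.id ℂ H from rfl, adjoint_id]
    rw [ContinuousLinearMap.mul_def, adjoint_comp, hWadj] at h2
    calc adjoint (↑u⁻¹ : H →L[ℂ] H)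
        = adjoint (↑u⁻¹ : H →L[ℂ] H) ∘L ((↑u : H →L[ℂ] H) * (↑u⁻¹ : H →L[ℂ] H)) := by
          rw [u.mul_inv]; rfl
      _ = (adjoint (↑u⁻¹ : H →L[ℂ] H) ∘L (↑u : H →L[ℂ] H)) ∘L (↑u⁻¹ : H →L[ℂ] H) := by
          rw [ContinuousLinearMap.mul_def, ContinuousLinearMap.comp_assoc]
      _ = (↑u⁻¹ : H →L[ℂ] H) := by rw [h2]; rfl
  have hTadj : adjoint T = (↑u⁻¹ : H →L[ℂ] H) ∘L (A ∘L Q) := by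
    rw [hT_def, adjoint_comp, adjoint_comp, adjoint_adjoint, hQadj, huadj,
      ContinuousLinearMap.comp_assoc]
  -- pointwise formula for T† T
  have hcommW : Commute (↑u⁻¹ : H →L[ℂ] H) (A ∘L adjoint A) := by
    have h1 : Commute (A ∘L adjoint A) (↑u : H →L[ℂ] H) := by
      rw [hu]
      exact (Commute.one_right _).sub_right (Commute.refl _)
    exact (h1.units_inv_right).symm
  have hTTw : ∀ w : H, adjoint T (T w) = A (adjoint A ((↑u⁻¹ : H →L[ℂ] H) w)) := by
    intro w
    rw [hTadj]
    simp only [ContinuousLinearMap.comp_apply]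
    rw [hQT w]
    have := ContinuousLinearMap.ext_iff.mp hcommW.eq w
    simpa [ContinuousLinearMap.mul_apply] using this
  -- identify B₀
  have hB1' : ∀ v : H, B₀ v + adjoint T (T (B₀ v)) = v := by
    intro v
    obtain ⟨hx, hy, heq⟩ := hB1 v
    have e1 : A₀ ⟨B₀ v, hx⟩ = T (B₀ v) := hval _ hx
    have e2 : A₀.adjoint ⟨A₀ ⟨B₀ v, hx⟩, hy⟩ = adjoint T (T (B₀ v)) := by
      rw [hadjval _ hy, e1]
    rw [← e2]
    exact heq
  have hB₀u : B₀ = (↑u : H →L[ℂ] H) := by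
    ext v
    have h1 := hB1' v
    rw [hTTw (B₀ v)] at h1
    set w := (↑u⁻¹ : H →L[ℂ] H) (B₀ v) with hw
    have h2 : B₀ v = w - A (adjoint A w) := (huinv₂ (B₀ v)).symm
    rw [h2] at h1
    have h3 : w = v := by simpa using h1
    rw [h2, h3, hu]
    simp
  have hS₀sq' : S₀ ∘L S₀ = 1 - A ∘L adjoint A := by rw [hS₀sq, hB₀u, hu]
  have hS₀Aw : ∀ z : H, S₀ (S₀ z) = z - A (adjoint A z) := by
    intro z
    have := ContinuousLinearMap.ext_iff.mp hS₀sq' z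
    simpa using this
  -- the intertwining relation
  have hint : S₀ ∘L A = A ∘L Q := by
    refine intertwine_of_sq A S₀ Q hS₀pos hQ ?_
    ext z
    simp only [ContinuousLinearMap.comp_apply]
    rw [hS₀Aw (A z), hQQ z, map_sub]
  -- conclusion
  refine ⟨hadjmem y, ?_⟩
  rw [hadjval y (hadjmem y), hTadj]
  simp only [ContinuousLinearMap.comp_apply]
  have hcommS : Commute S₀ (↑u⁻¹ : H →L[ℂ] H) := by
    have h1 : Commute S₀ (↑u : H →L[ℂ] H) := by
      rw [hu, ← hS₀sq']
      exact (Commute.refl S₀).mul_right (Commute.refl S₀)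
    exact h1.units_inv_right
  have h4 : S₀ ((↑u⁻¹ : H →L[ℂ] H) (A (Q y))) = (↑u⁻¹ : H →L[ℂ] H) (S₀ (A (Q y))) := by
    have := ContinuousLinearMap.ext_iff.mp hcommS.eq (A (Q y))
    simpa [ContinuousLinearMap.mul_apply] using this
  rw [h4]
  have h5 : S₀ (A (Q y)) = A (Q (Q y)) := by
    have := ContinuousLinearMap.ext_iff.mp hint (Q y)
    simpa using this
  rw [h5, hQQ y, map_sub]
  exact huinv₁ (A y)
end

section
/- Let A be a bounded operator from a complex Hilbert space K to a complex Hilbert space H with ‖A‖ < 1, and let T = (I − A*A)^{−1/2}A* with domain D((I − AA*)^{−1/2}) in H. Then for each x in the domain of T, ‖Tx‖² + ‖x‖² = ‖(I − AA*)^{−1/2}x‖². -/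
open ContinuousLinearMap

/-- Let `A : K →L H`, `‖A‖ < 1`, and let `P = (I − AA*)^{1/2}` be the positive
square root of `I − AA*`.  For `T = (I − A*A)^{−1/2}A*`, interpreted via
`T x = A*((I − AA*)^{−1/2} x)` on the domain `D((I − AA*)^{−1/2}) = range P`, one has
`‖Tx‖² + ‖x‖² = ‖(I − AA*)^{−1/2}x‖²` for every `x` in the domain; i.e. for `x = P y`,
`‖A* y‖² + ‖x‖² = ‖y‖²`. -/
theorem norm_identity_for_T
    {H K : Type*} [NormedAddCommGroup H] [InnerProductSpace ℂ H] [CompleteSpace H]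
    [NormedAddCommGroup K] [InnerProductSpace ℂ K] [CompleteSpace K]
    (A : K →L[ℂ] H) (hA : ‖A‖ < 1)
    (P : H →L[ℂ] H) (hP : P.IsPositive) (hP2 : P ∘L P = 1 - A ∘L adjoint A) :
    ∀ x y : H, P y = x → ‖adjoint A y‖ ^ 2 + ‖x‖ ^ 2 = ‖y‖ ^ 2 := by
  rintro x y rfl
  have hsa : adjoint P = P := hP.isSelfAdjoint
  have key : (inner ℂ (P y) (P y) : ℂ) = inner ℂ y y - inner ℂ (adjoint A y) (adjoint A y) := by
    calc (inner ℂ (P y) (P y) : ℂ) = inner ℂ y ((P ∘L P) y) := by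
          rw [comp_apply, ← hsa, adjoint_inner_left, hsa]
      _ = inner ℂ y y - inner ℂ (adjoint A y) (adjoint A y) := by
          rw [hP2]
          simp only [sub_apply, comp_apply, one_apply, inner_sub_right, ← adjoint_inner_left]
          rw [show adjoint (1 : H →L[ℂ] H) = 1 from star_one _, ContinuousLinearMap.one_apply]
  have := congrArg Complex.re key
  rw [Complex.sub_re] at this
  simp only [← RCLike.re_to_complex, inner_self_eq_norm_sq] at this
  linarith
end

section
/- Let A be a bounded complex symmetric operator from K to H with ‖A‖ < 1, with respect to a conjugation pair. Then T = (I − A*A)^{−1/2}A* is a closed densely-defined complex symmetric operator from H to K, i.e. there exists a conjugation pair (𝒞₁, 𝒞₂) from H to K such that T𝒞₂ = 𝒞₁T*. -/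
open ContinuousLinearMap
open scoped InnerProductSpace

set_option synthInstance.maxHeartbeats 1000000
set_option maxHeartbeats 4000000
set_option linter.unnecessarySimpa false

theorem exists_conjugation_comm
    {K : Type*} [NormedAddCommGroup K] [InnerProductSpace ℂ K] [CompleteSpace K]
    (Q : K →L[ℂ] K) (hQm : ∀ x y : K, ⟪Q x, y⟫_ℂ = ⟪x, Q y⟫_ℂ) :
    ∃ J : K → K, Continuous J ∧ (∀ a b, J (a + b) = J a + J b) ∧
      (∀ (c : ℂ) (a : K), J (c • a) = (starRingEnd ℂ) c • J a) ∧
      (∀ a, J (J a) = a) ∧ (∀ a b, ⟪J a, J b⟫_ℂ = ⟪b, a⟫_ℂ) ∧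
      (∀ a, J (Q a) = Q (J a)) := by
  letI : InnerProductSpace ℝ K := InnerProductSpace.rclikeToReal ℂ K
  have hinner_re : ∀ x y : K, ⟪x, y⟫_ℝ = RCLike.re ⟪x, y⟫_ℂ := fun x y => rfl
  -- the collection of good real subspaces
  set 𝒮 : Set (Submodule ℝ K) :=
    {E | IsClosed (E : Set K) ∧
      (∀ a ∈ E, ∀ b ∈ E, (starRingEnd ℂ) ⟪a, b⟫_ℂ = ⟪a, b⟫_ℂ) ∧ (∀ a ∈ E, Q a ∈ E)} with h𝒮
  have hclosure : ∀ E : Submodule ℝ K,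
      (∀ a ∈ E, ∀ b ∈ E, (starRingEnd ℂ) ⟪a, b⟫_ℂ = ⟪a, b⟫_ℂ) → (∀ a ∈ E, Q a ∈ E) →
      E.topologicalClosure ∈ 𝒮 := by
    intro E h1 h2
    have hmem : ∀ x : K, x ∈ E.topologicalClosure ↔ x ∈ closure (E : Set K) := by
      intro x; rw [← Submodule.topologicalClosure_coe]; rfl
    refine ⟨Submodule.isClosed_topologicalClosure E, ?_, ?_⟩
    · intro a ha b hb
      rw [hmem] at ha hb
      have step1 : ∀ b' ∈ (E : Set K), (starRingEnd ℂ) ⟪a, b'⟫_ℂ = ⟪a, b'⟫_ℂ := by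
        intro b' hb'
        have hcl : IsClosed {x : K | (starRingEnd ℂ) ⟪x, b'⟫_ℂ = ⟪x, b'⟫_ℂ} :=
          isClosed_eq (Complex.continuous_conj.comp (Continuous.inner continuous_id
            continuous_const)) (Continuous.inner continuous_id continuous_const)
        exact closure_minimal (fun x hx => h1 x hx b' hb') hcl ha
      have hcl2 : IsClosed {x : K | (starRingEnd ℂ) ⟪a, x⟫_ℂ = ⟪a, x⟫_ℂ} :=
        isClosed_eq (Complex.continuous_conj.comp (Continuous.inner continuous_const
          continuous_id)) (Continuous.inner continuous_const continuous_id)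
      exact closure_minimal (fun x hx => step1 x hx) hcl2 hb
    · intro a ha
      rw [hmem] at ha ⊢
      have : Q a ∈ Q '' closure (E : Set K) := ⟨a, ha, rfl⟩
      have h3 : Q '' closure (E : Set K) ⊆ closure (Q '' (E : Set K)) :=
        image_closure_subset_closure_image Q.continuous
      exact closure_mono (Set.image_subset_iff.mpr (fun x hx => h2 x hx)) (h3 this)
  -- Zorn
  obtain ⟨E, hE, hEmax⟩ : ∃ E, Maximal (· ∈ 𝒮) E := by
    apply zorn_le₀ 𝒮
    intro c hc hchain
    rcases c.eq_empty_or_nonempty with rfl | hcne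
    · refine ⟨⊥, ⟨?_, ?_, ?_⟩, by simp⟩
      · rw [Submodule.bot_coe]; exact isClosed_singleton
      · intro a ha b hb
        rw [Submodule.mem_bot] at ha; subst ha; simp
      · intro a ha; rw [Submodule.mem_bot] at ha; subst ha; simp
    · have hdir : DirectedOn (· ≤ ·) c := hchain.directedOn
      have hmemS : ∀ x, x ∈ sSup c ↔ ∃ E' ∈ c, x ∈ E' :=
        fun x => Submodule.mem_sSup_of_directed hcne hdir
      refine ⟨(sSup c).topologicalClosure, ?_, ?_⟩
      · apply hclosure
        · intro a ha b hb
          obtain ⟨Ea, hEa, ha'⟩ := (hmemS a).1 ha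
          obtain ⟨Eb, hEb, hb'⟩ := (hmemS b).1 hb
          rcases hchain.total hEa hEb with h | h
          · exact (hc hEb).2.1 a (h ha') b hb'
          · exact (hc hEa).2.1 a ha' b (h hb')
        · intro a ha
          obtain ⟨Ea, hEa, ha'⟩ := (hmemS a).1 ha
          exact (hmemS (Q a)).2 ⟨Ea, hEa, (hc hEa).2.2 a ha'⟩
      · intro z hz
        exact le_trans (le_sSup hz) (Submodule.le_topologicalClosure _)
  obtain ⟨hEclosed, hEreal, hEQ⟩ := hE
  -- V = closure of complex span of E is all of K
  set W : Submodule ℂ K := Submodule.span ℂ (E : Set K) with hW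
  set V : Submodule ℂ K := W.topologicalClosure with hV
  have hmemV : ∀ x : K, x ∈ V ↔ x ∈ closure (W : Set K) := by
    intro x; rw [← Submodule.topologicalClosure_coe]; rfl
  have hQW : ∀ w ∈ W, Q w ∈ W := by
    intro w hw
    induction hw using Submodule.span_induction with
    | mem x hx => exact Submodule.subset_span (hEQ x hx)
    | zero => simp
    | add x y _ _ hx hy => rw [map_add]; exact W.add_mem hx hy
    | smul c x _ hx => rw [map_smul]; exact W.smul_mem c hx
  have hQV : ∀ v ∈ V, Q v ∈ V := by
    intro v hv
    rw [hmemV] at hv ⊢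
    have h3 : Q '' closure (W : Set K) ⊆ closure (Q '' (W : Set K)) :=
      image_closure_subset_closure_image Q.continuous
    exact closure_mono (Set.image_subset_iff.mpr (fun x hx => hQW x hx)) (h3 ⟨v, hv, rfl⟩)
  have hQVperp : ∀ x ∈ Vᗮ, Q x ∈ Vᗮ := by
    intro x hx
    rw [Submodule.mem_orthogonal] at hx ⊢
    intro u hu
    rw [← hQm]
    -- ⟪Q u, x⟫ = 0
    have := hx (Q u) (hQV u hu)
    rw [hQm] at this
    rw [hQm]; exact this
  have hVtop : V = ⊤ := by
    by_contra hne
    haveI : CompleteSpace V := (Submodule.isClosed_topologicalClosure W).completeSpace_coe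
    have : Vᗮ ≠ ⊥ := fun h => hne (Submodule.orthogonal_eq_bot_iff.mp h)
    obtain ⟨x, hxV, hx0⟩ := Submodule.ne_bot_iff _ |>.mp this
    -- powers of Q stay in Vᗮ
    have hpow : ∀ n : ℕ, (Q ^ n) x ∈ Vᗮ := by
      intro n
      induction n with
      | zero => simpa using hxV
      | succ n ih =>
        have : Q ^ (n + 1) = Q * Q ^ n := (pow_succ' Q n)
        rw [this, ContinuousLinearMap.mul_apply]
        exact hQVperp _ ih
    have hpowinner : ∀ n m : ℕ, ⟪(Q ^ n) x, (Q ^ m) x⟫_ℂ = ⟪(Q ^ (n + m)) x, x⟫_ℂ := by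
      intro n m
      induction m generalizing n with
      | zero => simp
      | succ m ih =>
        have h1 : Q ^ (m + 1) = Q * Q ^ m := pow_succ' Q m
        have h2 : Q ^ (n + 1) = Q * Q ^ n := pow_succ' Q n
        calc ⟪(Q ^ n) x, (Q ^ (m+1)) x⟫_ℂ = ⟪(Q ^ n) x, Q ((Q ^ m) x)⟫_ℂ := by
              rw [h1, ContinuousLinearMap.mul_apply]
          _ = ⟪Q ((Q ^ n) x), (Q ^ m) x⟫_ℂ := (hQm _ _).symm
          _ = ⟪(Q ^ (n+1)) x, (Q ^ m) x⟫_ℂ := by rw [h2, ContinuousLinearMap.mul_apply]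
          _ = ⟪(Q ^ (n + 1 + m)) x, x⟫_ℂ := ih (n+1)
          _ = ⟪(Q ^ (n + (m+1))) x, x⟫_ℂ := by ring_nf
    have hgenreal : ∀ n m : ℕ,
        (starRingEnd ℂ) ⟪(Q ^ n) x, (Q ^ m) x⟫_ℂ = ⟪(Q ^ n) x, (Q ^ m) x⟫_ℂ := by
      intro n m
      rw [inner_conj_symm, hpowinner m n, hpowinner n m, add_comm m n]
    set Sgen : Set K := Set.range (fun n : ℕ => (Q ^ n) x) with hSgen
    set E' : Submodule ℝ K := E ⊔ Submodule.span ℝ Sgen with hE'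
    have hspanperp : ∀ s ∈ Submodule.span ℝ Sgen, s ∈ Vᗮ := by
      intro s hs
      have : Submodule.span ℝ Sgen ≤ Vᗮ.restrictScalars ℝ := by
        rw [Submodule.span_le]
        rintro _ ⟨n, rfl⟩
        exact hpow n
      exact this hs
    have hEsubV : ∀ e ∈ E, e ∈ V := by
      intro e he
      exact Submodule.le_topologicalClosure W (Submodule.subset_span he)
    have hcross : ∀ e ∈ E, ∀ s ∈ Submodule.span ℝ Sgen,
        ⟪e, s⟫_ℂ = 0 ∧ ⟪s, e⟫_ℂ = 0 := by
      intro e he s hs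
      have h1 : ⟪e, s⟫_ℂ = 0 :=
        Submodule.inner_right_of_mem_orthogonal (hEsubV e he) (hspanperp s hs)
      exact ⟨h1, by rw [← inner_conj_symm, h1, map_zero]⟩
    have hspanreal : ∀ s ∈ Submodule.span ℝ Sgen, ∀ s' ∈ Submodule.span ℝ Sgen,
        (starRingEnd ℂ) ⟪s, s'⟫_ℂ = ⟪s, s'⟫_ℂ := by
      intro s hs s' hs'
      induction hs using Submodule.span_induction generalizing s' with
      | mem a ha =>
        induction hs' using Submodule.span_induction with
        | mem b hb =>
          obtain ⟨n, rfl⟩ := ha; obtain ⟨m, rfl⟩ := hb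
          exact hgenreal n m
        | zero => simp
        | add u v hu hv hu' hv' => rw [inner_add_right, map_add, hu', hv']
        | smul r u hu hu' =>
          rw [← Complex.coe_smul, inner_smul_right, map_mul, hu', Complex.conj_ofReal]
      | zero => simp
      | add u v hu hv hu' hv' =>
        rw [inner_add_left, map_add, hu' s' hs', hv' s' hs']
      | smul r u hu hu' =>
        rw [← Complex.coe_smul, inner_smul_left, map_mul, hu' s' hs', Complex.conj_conj,
          Complex.conj_ofReal]
    have hE'' : E'.topologicalClosure ∈ 𝒮 := by
      apply hclosure
      · intro a ha b hb
        rw [hE', Submodule.mem_sup] at ha hb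
        obtain ⟨ea, hea, sa, hsa, rfl⟩ := ha
        obtain ⟨eb, heb, sb, hsb, rfl⟩ := hb
        rw [inner_add_left, inner_add_right, inner_add_right, map_add, map_add, map_add]
        rw [hEreal ea hea eb heb, (hcross ea hea sb hsb).1, (hcross eb heb sa hsa).2,
          hspanreal sa hsa sb hsb]
        simp
      · intro a ha
        rw [hE', Submodule.mem_sup] at ha ⊢
        obtain ⟨ea, hea, sa, hsa, rfl⟩ := ha
        refine ⟨Q ea, hEQ ea hea, Q sa, ?_, by rw [map_add]⟩
        · clear hspanreal hcross
          induction hsa using Submodule.span_induction with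
          | mem a ha => obtain ⟨n, rfl⟩ := ha
                        refine Submodule.subset_span ⟨n+1, ?_⟩
                        show (Q ^ (n+1)) x = Q ((Q ^ n) x)
                        rw [pow_succ' Q n, ContinuousLinearMap.mul_apply]
          | zero => simp
          | add u v _ _ hu hv => rw [map_add]; exact Submodule.add_mem _ hu hv
          | smul r u _ hu =>
              rw [ContinuousLinearMap.map_smul_of_tower]; exact Submodule.smul_mem _ r hu
    -- contradiction with maximality
    have hle : E ≤ E'.topologicalClosure :=
      le_trans le_sup_left (Submodule.le_topologicalClosure E')
    have hge := hEmax hE'' hle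
    have hxE' : x ∈ E'.topologicalClosure := by
      apply Submodule.le_topologicalClosure E'
      apply Submodule.mem_sup_right
      exact Submodule.subset_span ⟨0, by simp⟩
    have hxE : x ∈ E := hge hxE'
    have : ⟪x, x⟫_ℂ = 0 :=
      Submodule.inner_right_of_mem_orthogonal (hEsubV x hxE) hxV
    exact hx0 (inner_self_eq_zero.mp this)

  -- J construction
  have hWdense : Dense (W : Set K) := by
    have h1 : closure (W : Set K) = Set.univ := by
      rw [← Submodule.topologicalClosure_coe, ← hV, hVtop, Submodule.top_coe]
    rw [dense_iff_closure_eq, h1]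
  haveI : CompleteSpace E := hEclosed.completeSpace_coe
  set π := Submodule.orthogonalProjectionOnto E with hπ
  set J : K → K := fun y => (2:ℝ) • (↑(π y) : K) - y with hJ
  have Jcont : Continuous J := by
    exact ((continuous_subtype_val.comp π.continuous).const_smul (2:ℝ)).sub continuous_id
  have Jadd : ∀ a b, J (a+b) = J a + J b := by
    intro a b
    show (2:ℝ) • (↑(π (a+b)) : K) - (a+b) = ((2:ℝ) • (↑(π a) : K) - a) + ((2:ℝ) • (↑(π b) : K) - b)
    rw [map_add, Submodule.coe_add, smul_add]
    abel
  have Jsmulr : ∀ (r : ℝ) (a : K), J (r • a) = r • J a := by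
    intro r a
    show (2:ℝ) • (↑(π (r • a)) : K) - (r • a) = r • ((2:ℝ) • (↑(π a) : K) - a)
    rw [map_smul, Submodule.coe_smul, smul_sub, smul_comm]
  have Jneg : ∀ a, J (-a) = - J a := by
    intro a
    have := Jsmulr (-1) a
    simpa using this
  have JE : ∀ e ∈ E, J e = e := by
    intro e he
    have h1 : (↑(π e) : K) = e := Submodule.starProjection_eq_self_iff.mpr he
    show (2:ℝ) • (↑(π e) : K) - e = e
    rw [h1, two_smul]; abel
  have JiE : ∀ e ∈ E, J (Complex.I • e) = -(Complex.I • e) := by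
    intro e he
    have hperp : Complex.I • e ∈ Eᗮ := by
      rw [Submodule.mem_orthogonal]
      intro u hu
      rw [hinner_re, inner_smul_right]
      have hre := hEreal u hu e he
      rw [Complex.conj_eq_iff_im] at hre
      simp [Complex.mul_re, hre]
    have h1 : π (Complex.I • e) = 0 :=
      Submodule.orthogonalProjectionOnto_apply_of_mem_orthogonal hperp
    show (2:ℝ) • (↑(π (Complex.I • e)) : K) - Complex.I • e = -(Complex.I • e)
    rw [h1]; simp
  -- dense real span of E ∪ I•E
  set S : Set K := (E : Set K) ∪ ((fun e => Complex.I • e) '' (E : Set K)) with hS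
  have hI : ∀ z ∈ Submodule.span ℝ S, Complex.I • z ∈ Submodule.span ℝ S := by
    intro z hz
    induction hz using Submodule.span_induction with
    | mem a ha =>
      rcases ha with ha | ⟨e, he, rfl⟩
      · exact Submodule.subset_span (Or.inr ⟨a, ha, rfl⟩)
      · have : Complex.I • Complex.I • e = -e := by
          rw [smul_smul, Complex.I_mul_I, neg_one_smul]
        rw [this]
        exact Submodule.neg_mem _ (Submodule.subset_span (Or.inl he))
    | zero => rw [smul_zero]; exact Submodule.zero_mem _
    | add u v _ _ hu hv => rw [smul_add]; exact Submodule.add_mem _ hu hv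
    | smul r u _ hu => rw [smul_comm]; exact Submodule.smul_mem _ r hu
  have hWsub : (W : Set K) ⊆ (Submodule.span ℝ S : Set K) := by
    intro z hz
    rw [SetLike.mem_coe] at hz ⊢
    induction hz using Submodule.span_induction with
    | mem a ha => exact Submodule.subset_span (Or.inl ha)
    | zero => exact Submodule.zero_mem _
    | add u v _ _ hu hv => exact Submodule.add_mem _ hu hv
    | smul c u _ hu =>
      have hcu : c • u = (c.re : ℝ) • u + (c.im : ℝ) • (Complex.I • u) := by
        rw [← Complex.coe_smul, ← Complex.coe_smul, smul_smul, ← add_smul]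
        rw [Complex.re_add_im]
      rw [hcu]
      exact Submodule.add_mem _ (Submodule.smul_mem _ _ hu) (Submodule.smul_mem _ _ (hI u hu))
  have hSdense : Dense (Submodule.span ℝ S : Set K) := hWdense.mono hWsub
  -- J is conjugate-linear w.r.t. I on a dense set, hence everywhere
  have JI : ∀ y, J (Complex.I • y) = (-Complex.I) • J y := by
    have heq : (fun y => J (Complex.I • y)) = fun y => (-Complex.I) • J y := by
      refine Continuous.ext_on hSdense (Jcont.comp (continuous_const_smul _))
        ((Jcont).const_smul _) ?_
      intro y hy
      rw [SetLike.mem_coe] at hy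
      induction hy using Submodule.span_induction with
      | mem a ha =>
        rcases ha with ha | ⟨e, he, rfl⟩
        · show J (Complex.I • a) = (-Complex.I) • J a
          rw [JiE a ha, JE a ha, neg_smul]
        · show J (Complex.I • Complex.I • e) = (-Complex.I) • J (Complex.I • e)
          have h1 : Complex.I • Complex.I • e = -e := by
            rw [smul_smul, Complex.I_mul_I, neg_one_smul]
          rw [h1, Jneg, JE e he, JiE e he, smul_neg, smul_smul, neg_mul,
            Complex.I_mul_I, neg_neg, one_smul]
      | zero => show J (Complex.I • 0) = (-Complex.I) • J 0
                have : J 0 = 0 := by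
                  have := Jsmulr 0 0; simpa using this
                rw [smul_zero, this, smul_zero]
      | add u v _ _ hu hv =>
        simp only [] at hu hv
        show J (Complex.I • (u + v)) = (-Complex.I) • J (u + v)
        rw [smul_add, Jadd, Jadd, hu, hv, smul_add]
      | smul r u _ hu =>
        simp only [] at hu
        show J (Complex.I • r • u) = (-Complex.I) • J (r • u)
        rw [smul_comm, Jsmulr, hu, Jsmulr, smul_comm]
    exact fun y => congrFun heq y
  have J0 : J 0 = 0 := by have := Jsmulr 0 0; simpa using this
  have JJ : ∀ y, J (J y) = y := by
    have heq : (fun y => J (J y)) = fun y => y := by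
      refine Continuous.ext_on hSdense (Jcont.comp Jcont) continuous_id ?_
      intro y hy
      rw [SetLike.mem_coe] at hy
      induction hy using Submodule.span_induction with
      | mem a ha =>
        rcases ha with ha | ⟨e, he, rfl⟩
        · show J (J a) = a
          rw [JE a ha, JE a ha]
        · show J (J (Complex.I • e)) = Complex.I • e
          rw [JiE e he, Jneg, JiE e he, neg_neg]
      | zero => show J (J 0) = 0; rw [J0, J0]
      | add u v _ _ hu hv => simp only [] at hu hv
                             show J (J (u+v)) = u + v
                             rw [Jadd, Jadd, hu, hv]
      | smul r u _ hu => simp only [] at hu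
                         show J (J (r • u)) = r • u
                         rw [Jsmulr, Jsmulr, hu]
    exact fun y => congrFun heq y
  have Jc : ∀ (c : ℂ) (a : K), J (c • a) = (starRingEnd ℂ) c • J a := by
    intro c a
    have hca : c • a = (c.re : ℝ) • a + (c.im : ℝ) • (Complex.I • a) := by
      rw [← Complex.coe_smul, ← Complex.coe_smul, smul_smul, ← add_smul, Complex.re_add_im]
    have hconj : (starRingEnd ℂ) c • J a
        = (c.re : ℝ) • J a + (c.im : ℝ) • ((-Complex.I) • J a) := by
      rw [← Complex.coe_smul, ← Complex.coe_smul, smul_smul, ← add_smul]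
      congr 1
      rw [mul_neg, ← neg_mul]
      exact (Complex.re_add_im _).symm.trans (by simp [Complex.ext_iff])
    rw [hca, Jadd, Jsmulr, Jsmulr, JI, hconj]
  have Jpair : ∀ a b, ⟪J a, J b⟫_ℂ = ⟪b, a⟫_ℂ := by
    have base : ∀ a ∈ S, ∀ b ∈ S, ⟪J a, J b⟫_ℂ = ⟪b, a⟫_ℂ := by
      intro a ha b hb
      have hre : ∀ u ∈ E, ∀ v ∈ E, ⟪u, v⟫_ℂ = ⟪v, u⟫_ℂ := by
        intro u hu v hv
        rw [← inner_conj_symm, hEreal v hv u hu]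
      rcases ha with ha | ⟨e, he, rfl⟩ <;> rcases hb with hb | ⟨f, hf, rfl⟩
      · rw [JE a ha, JE b hb, hre a ha b hb]
      · rw [JE a ha, JiE f hf, inner_neg_right, inner_smul_right, inner_smul_left,
          Complex.conj_I, hre a ha f hf]
        ring
      · rw [JiE e he, JE b hb, inner_neg_left, inner_smul_left, inner_smul_right,
          Complex.conj_I, hre e he b hb]
        ring
      · rw [JiE e he, JiE f hf, inner_neg_neg, inner_smul_left, inner_smul_right,
          inner_smul_left, inner_smul_right, Complex.conj_I, hre e he f hf]
        try ring
    have step_b : ∀ a ∈ S, ∀ b, ⟪J a, J b⟫_ℂ = ⟪b, a⟫_ℂ := by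
      intro a ha
      have heq : (fun b => ⟪J a, J b⟫_ℂ) = fun b => ⟪b, a⟫_ℂ := by
        refine Continuous.ext_on hSdense
          ((continuous_const.inner (Jcont)))
          ((continuous_id.inner continuous_const)) ?_
        intro b hb
        rw [SetLike.mem_coe] at hb
        induction hb using Submodule.span_induction with
        | mem z hz => exact base a ha z hz
        | zero => show ⟪J a, J 0⟫_ℂ = ⟪0, a⟫_ℂ
                  rw [J0, inner_zero_right, inner_zero_left]
        | add u v _ _ hu hv =>
          simp only [] at hu hv
          show ⟪J a, J (u+v)⟫_ℂ = ⟪u+v, a⟫_ℂ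
          rw [Jadd, inner_add_right, inner_add_left, hu, hv]
        | smul r u _ hu =>
          simp only [] at hu
          show ⟪J a, J (r • u)⟫_ℂ = ⟪r • u, a⟫_ℂ
          rw [Jsmulr, ← Complex.coe_smul (y := J u), ← Complex.coe_smul (y := u),
            inner_smul_right, inner_smul_left, Complex.conj_ofReal, hu]
      exact fun b => congrFun heq b
    intro a b
    have heq : (fun a => ⟪J a, J b⟫_ℂ) = fun a => ⟪b, a⟫_ℂ := by
      refine Continuous.ext_on hSdense ((Jcont.inner continuous_const))
        ((continuous_const.inner continuous_id)) ?_
      intro a ha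
      rw [SetLike.mem_coe] at ha
      induction ha using Submodule.span_induction with
      | mem z hz => exact step_b z hz b
      | zero => show ⟪J 0, J b⟫_ℂ = ⟪b, 0⟫_ℂ
                rw [J0, inner_zero_left, inner_zero_right]
      | add u v _ _ hu hv =>
        simp only [] at hu hv
        show ⟪J (u+v), J b⟫_ℂ = ⟪b, u+v⟫_ℂ
        rw [Jadd, inner_add_left, inner_add_right, hu, hv]
      | smul r u _ hu =>
        simp only [] at hu
        show ⟪J (r • u), J b⟫_ℂ = ⟪b, r • u⟫_ℂ
        rw [Jsmulr, ← Complex.coe_smul (y := J u), ← Complex.coe_smul (y := u),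
          inner_smul_left, inner_smul_right, Complex.conj_ofReal, hu]
    exact congrFun heq a
  have JQcomm : ∀ a, J (Q a) = Q (J a) := by
    have heq : (fun a => J (Q a)) = fun a => Q (J a) := by
      refine Continuous.ext_on hSdense (Jcont.comp Q.continuous)
        (Q.continuous.comp Jcont) ?_
      intro a ha
      rw [SetLike.mem_coe] at ha
      induction ha using Submodule.span_induction with
      | mem z hz =>
        rcases hz with hz | ⟨e, he, rfl⟩
        · show J (Q z) = Q (J z)
          rw [JE z hz, JE (Q z) (hEQ z hz)]
        · show J (Q (Complex.I • e)) = Q (J (Complex.I • e))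
          rw [map_smul, JiE e he, JiE (Q e) (hEQ e he), map_neg, map_smul]
      | zero => show J (Q 0) = Q (J 0); simp [J0]
      | add u v _ _ hu hv => simp only [] at hu hv
                             show J (Q (u+v)) = Q (J (u+v))
                             rw [map_add, Jadd, Jadd, map_add, hu, hv]
      | smul r u _ hu =>
        simp only [] at hu
        show J (Q (r • u)) = Q (J (r • u))
        rw [ContinuousLinearMap.map_smul_of_tower, Jsmulr, Jsmulr, hu,
          ContinuousLinearMap.map_smul_of_tower]
    exact fun a => congrFun heq a
  exact ⟨J, Jcont, Jadd, Jc, JJ, Jpair, JQcomm⟩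

/-- Let `A : K →L H` be a complex symmetric contraction (`‖A‖ < 1`,
`(C₁,C₂)`-symmetric for some conjugation pair).  Then `T = (I − A*A)^{−1/2}A*`
(with graph `{(x, z) : ∃ y, (I − AA*)^{1/2} y = x ∧ z = A* y}`) is a closed densely-defined
complex symmetric operator from `H` to `K`: there is a conjugation pair `(𝒞₁, 𝒞₂)` from `H`
to `K` (with `𝒞₁𝒞₂ = id_K`) such that `T𝒞₂ = 𝒞₁T*` as an equality of partial maps. -/
theorem T_complex_symmetric
    {H K : Type*} [NormedAddCommGroup H] [InnerProductSpace ℂ H] [CompleteSpace H]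
    [NormedAddCommGroup K] [InnerProductSpace ℂ K] [CompleteSpace K]
    (C₁ : K →L⋆[ℂ] H) (C₂ : H →L⋆[ℂ] K)
    (hC : ∀ y : K, C₂ (C₁ y) = y)
    (hpair : ∀ (y : K) (x : H), ⟪C₁ y, x⟫_ℂ = ⟪C₂ x, y⟫_ℂ)
    (A : K →L[ℂ] H) (hA : ‖A‖ < 1)
    (hsym : ∀ y : K, adjoint A (C₁ y) = C₂ (A y))
    (P : H →L[ℂ] H) (hP : P.IsPositive) (hP2 : P ∘L P = 1 - A ∘L adjoint A)
    (T : H →ₗ.[ℂ] K)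
    (hT : ∀ (x : H) (z : K), (x, z) ∈ T.graph ↔ ∃ y : H, P y = x ∧ z = adjoint A y) :
    Dense (T.domain : Set H) ∧ T.IsClosed ∧
    ∃ (D₁ : H →ₗ⋆[ℂ] K) (D₂ : K →ₗ⋆[ℂ] H),
      (∀ y : K, D₁ (D₂ y) = y) ∧
      (∀ (x : H) (y : K), ⟪D₁ x, y⟫_ℂ = ⟪D₂ y, x⟫_ℂ) ∧
      (∀ y : K,
        ((D₂ y ∈ T.domain) ↔ y ∈ T.adjoint.domain) ∧
        ∀ (h2 : D₂ y ∈ T.domain) (h1 : y ∈ T.adjoint.domain),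
          T ⟨D₂ y, h2⟩ = D₁ (T.adjoint ⟨y, h1⟩)) := by
  -- ## Step 1 : P is invertible
  have hPsa : IsSelfAdjoint P := hP.isSelfAdjoint
  have hAA : ‖A ∘L adjoint A‖ < 1 := by
    have h1 : ‖A ∘L adjoint A‖ ≤ ‖A‖ * ‖adjoint A‖ := opNorm_comp_le _ _
    have h2 : ‖adjoint A‖ = ‖A‖ := by
      simpa using (adjoint (𝕜 := ℂ) (E := K) (F := H)).norm_map A
    have h3 : ‖A‖ * ‖A‖ < 1 := by
      nlinarith [norm_nonneg A]
    calc ‖A ∘L adjoint A‖ ≤ ‖A‖ * ‖adjoint A‖ := h1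
      _ = ‖A‖ * ‖A‖ := by rw [h2]
      _ < 1 := h3
  set u : (H →L[ℂ] H)ˣ := Units.oneSub (A ∘L adjoint A) hAA with hu
  have hPPu : P * P = (u : H →L[ℂ] H) := by
    rw [hu]; exact hP2
  have hPcomm : Commute P (u : H →L[ℂ] H) := by
    rw [← hPPu]; exact (Commute.refl P).mul_right (Commute.refl P)
  have hPcomm' : Commute P ((u⁻¹ : (H →L[ℂ] H)ˣ) : H →L[ℂ] H) := hPcomm.units_inv_right
  set Pinv : H →L[ℂ] H := ((u⁻¹ : (H →L[ℂ] H)ˣ) : H →L[ℂ] H) * P with hPinv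
  have hPinvP : Pinv * P = 1 := by
    rw [hPinv, mul_assoc, hPPu]
    exact u.inv_mul
  have hPPinv : P * Pinv = 1 := by
    rw [hPinv, ← mul_assoc, hPcomm'.eq, mul_assoc, hPPu]
    exact u.inv_mul
  have hPinvP' : ∀ x : H, Pinv (P x) = x := fun x => by
    have := congrArg (fun f : H →L[ℂ] H => f x) hPinvP
    simpa using this
  have hPPinv' : ∀ x : H, P (Pinv x) = x := fun x => by
    have := congrArg (fun f : H →L[ℂ] H => f x) hPPinv
    simpa using this
  have hPinvsa : IsSelfAdjoint Pinv := by
    have h1 : star Pinv * P = 1 := by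
      have := congrArg star hPPinv
      rw [star_mul, star_one, hPsa.star_eq] at this
      exact this
    have h2 : star Pinv = star Pinv * (P * Pinv) := by rw [hPPinv, mul_one]
    show star Pinv = Pinv
    rw [h2, ← mul_assoc, h1, one_mul]
  -- ## Step 2 : T is the bounded operator T₀ = A† ∘ P⁻¹
  set T₀ : H →L[ℂ] K := adjoint A ∘L Pinv with hT₀
  have hgraph : ∀ p : H × K, p ∈ T.graph ↔ T₀ p.1 = p.2 := by
    intro p
    constructor
    · intro hp
      obtain ⟨y, hy1, hy2⟩ := (hT p.1 p.2).mp (by simpa using hp)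
      rw [hT₀, hy2, ← hy1]
      simp [hPinvP' y]
    · intro hp
      refine (hT p.1 p.2).mpr ⟨Pinv p.1, hPPinv' p.1, ?_⟩
      rw [← hp, hT₀]; rfl
  have hdomtop : T.domain = ⊤ := by
    rw [Submodule.eq_top_iff']
    intro x
    exact LinearPMap.mem_domain_of_mem_graph ((hgraph (x, T₀ x)).mpr rfl)
  have hTval : ∀ (x : H) (hx : x ∈ T.domain), T ⟨x, hx⟩ = T₀ x := by
    intro x hx
    have := (hgraph (x, T ⟨x, hx⟩)).mp (T.mem_graph ⟨x, hx⟩)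
    exact this.symm
  -- Dense domain
  have hdense : Dense (T.domain : Set H) := by
    rw [hdomtop]
    simp only [Submodule.top_coe]
    exact dense_univ
  refine ⟨hdense, ?_, ?_⟩
  -- ## Step 3 : closedness
  · show IsClosed (T.graph : Set (H × K))
    have : (T.graph : Set (H × K)) = {p : H × K | T₀ p.1 = p.2} := by
      ext p; exact hgraph p
    rw [this]
    exact isClosed_eq (T₀.continuous.comp continuous_fst) continuous_snd
  -- ## Step 4 : the adjoint
  · have hTeq : T = (T₀ : H →ₗ[ℂ] K).toPMap ⊤ := by
      refine LinearPMap.ext (by rw [hdomtop, LinearMap.toPMap_domain]) ?_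
      intro x hx hx'
      rw [hTval x hx]; rfl
    have hadj : T.adjoint = ((adjoint T₀ : K →L[ℂ] H) : K →ₗ[ℂ] H).toPMap ⊤ := by
      rw [hTeq]
      exact T₀.toPMap_adjoint_eq_adjoint_toPMap_of_dense (by simp [dense_univ])
    have hadjdom : ∀ y : K, y ∈ T.adjoint.domain := by
      intro y
      rw [hadj, LinearMap.toPMap_domain]
      trivial
    have hadjval : ∀ (y : K) (hy : y ∈ T.adjoint.domain), T.adjoint ⟨y, hy⟩ = adjoint T₀ y := by
      intro y hy
      obtain ⟨hdom, hval⟩ := LinearPMap.ext_iff.mp hadj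
      exact (hval (x := y) (hf := hy) (hg := by rw [LinearMap.toPMap_domain]; trivial)).trans
        (LinearMap.toPMap_apply _ _ _)
    -- ## Step 5 : positive square root Q of G = T₀ T₀†, and conjugation J commuting with Q
    have hG : (0 : K →L[ℂ] K) ≤ T₀ ∘L adjoint T₀ := by
      rw [ContinuousLinearMap.nonneg_iff_isPositive]
      have h := (isPositive_one (E := H) (𝕜 := ℂ)).conj_adjoint T₀
      convert h using 1; ext y; simp
    set G : K →L[ℂ] K := T₀ ∘L adjoint T₀ with hGdef
    set Q : K →L[ℂ] K := CFC.sqrt G with hQdef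
    have hQ0 : (0 : K →L[ℂ] K) ≤ Q := CFC.sqrt_nonneg G
    have hQQ : Q * Q = G := CFC.sqrt_mul_sqrt_self G hG
    have hQsa : IsSelfAdjoint Q := .of_nonneg hQ0
    have hQm : ∀ x y : K, ⟪Q x, y⟫_ℂ = ⟪x, Q y⟫_ℂ := by
      intro x y
      conv_lhs => rw [← isSelfAdjoint_iff'.mp hQsa]
      exact adjoint_inner_left Q y x
    obtain ⟨J, Jcont, Jadd, Jc, JJ, Jpair, JQ⟩ := exists_conjugation_comm Q hQm
    have J0 : J 0 = 0 := by
      have h := Jc 0 0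
      simpa using h
    have Jsym : ∀ a b, ⟪J a, b⟫_ℂ = ⟪J b, a⟫_ℂ := by
      intro a b
      conv_lhs => rw [← JJ b]
      rw [Jpair]
    have hT₀adj : adjoint T₀ = Pinv ∘L A := by
      rw [hT₀, adjoint_comp, adjoint_adjoint, isSelfAdjoint_iff'.mp hPinvsa]
    have hQQ' : ∀ y, Q (Q y) = G y := fun y => by
      have h := congrArg (fun f : K →L[ℂ] K => f y) hQQ
      simpa using h
    have hGapp : ∀ y, G y = T₀ (adjoint T₀ y) := fun y => rfl
    -- kernels : Q y = 0 ↔ A y = 0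
    have hinnerQQ : ∀ y, ⟪Q y, Q y⟫_ℂ = ⟪adjoint T₀ y, adjoint T₀ y⟫_ℂ := by
      intro y
      rw [hQm, hQQ', hGapp]
      exact (adjoint_inner_left T₀ (adjoint T₀ y) y).symm
    have hkerQA : ∀ y : K, Q y = 0 ↔ A y = 0 := by
      intro y
      constructor
      · intro h
        have h2 : adjoint T₀ y = 0 := by
          have h3 := hinnerQQ y
          rw [h, inner_zero_left] at h3
          exact inner_self_eq_zero.mp h3.symm
        have h4 : adjoint T₀ y = Pinv (A y) := by rw [hT₀adj]; rfl
        have : P (Pinv (A y)) = P 0 := by rw [← h4, h2]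
        rwa [hPPinv' (A y), map_zero] at this
      · intro h
        have h2 : adjoint T₀ y = 0 := by rw [hT₀adj]; show Pinv (A y) = 0; rw [h, map_zero]
        have h3 := hinnerQQ y
        rw [h2, inner_zero_left] at h3
        exact inner_self_eq_zero.mp h3
    -- ## Step 6 : the subspaces U and Uᗮ
    set rngQ : Submodule ℂ K := LinearMap.range (Q : K →ₗ[ℂ] K) with hrngQ
    set U : Submodule ℂ K := rngQ.topologicalClosure with hU
    have hle : rngQ ≤ U := Submodule.le_topologicalClosure _
    haveI : CompleteSpace U := (Submodule.isClosed_topologicalClosure rngQ).completeSpace_coe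
    have hmemU : ∀ x : K, x ∈ U ↔ x ∈ closure (rngQ : Set K) := by
      intro x; rw [← Submodule.topologicalClosure_coe]; rfl
    have hQmemU : ∀ z : K, Q z ∈ U := fun z => hle (LinearMap.mem_range_self (Q : K →ₗ[ℂ] K) z)
    have hUperp_mem : ∀ x : K, x ∈ Uᗮ ↔ A x = 0 := by
      intro x
      constructor
      · intro hx
        rw [Submodule.mem_orthogonal] at hx
        have h1 : ∀ z : K, ⟪z, Q x⟫_ℂ = 0 := by
          intro z
          rw [← hQm]
          exact hx (Q z) (hQmemU z)
        have h2 : Q x = 0 := inner_self_eq_zero.mp (h1 (Q x))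
        exact (hkerQA x).mp h2
      · intro hx
        have hQx : Q x = 0 := (hkerQA x).mpr hx
        rw [Submodule.mem_orthogonal]
        intro uu huu
        rw [hmemU] at huu
        have hcl : IsClosed {v : K | ⟪v, x⟫_ℂ = 0} :=
          isClosed_eq (continuous_id.inner continuous_const) continuous_const
        refine closure_minimal ?_ hcl huu
        rintro _ ⟨z, rfl⟩
        show ⟪Q z, x⟫_ℂ = 0
        rw [hQm, hQx, inner_zero_right]
    set πU := Submodule.orthogonalProjectionOnto U with hπU
    set πO := Submodule.orthogonalProjectionOnto Uᗮ with hπO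
    have hdecomp : ∀ y : K, (↑(πU y) : K) + ↑(πO y) = y := fun y =>
      Submodule.starProjection_add_starProjection_orthogonal (K := U) y
    have hAn : ∀ y : K, A ↑(πO y) = 0 := fun y => (hUperp_mem _).mp (πO y).2
    have hQn : ∀ y : K, Q ↑(πO y) = 0 := fun y => (hkerQA _).mpr (hAn y)
    -- ## Step 7 : the map Θ u = T₀† (J u) and its properties
    set Θ : K → H := fun v => adjoint T₀ (J v) with hΘ
    have hΘinner : ∀ v w : K, ⟪Θ v, Θ w⟫_ℂ = ⟪Q w, Q v⟫_ℂ := by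
      intro v w
      rw [hΘ]
      show ⟪adjoint T₀ (J v), adjoint T₀ (J w)⟫_ℂ = _
      rw [adjoint_inner_left T₀ (adjoint T₀ (J w)) (J v), ← hGapp, ← hQQ', ← JQ, ← JQ,
        Jpair, hQm]
    have hΘT : ∀ v : K, T₀ (Θ v) = Q (J (Q v)) := by
      intro v
      rw [hΘ]
      show T₀ (adjoint T₀ (J v)) = _
      rw [← hGapp, ← hQQ', ← JQ]
    have hT₀P : ∀ z : H, T₀ (P z) = adjoint A z := by
      intro z
      rw [hT₀]
      show adjoint A (Pinv (P z)) = adjoint A z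
      rw [hPinvP']
    have hΘPC : ∀ (v n : K), A n = 0 → ⟪Θ v, P (C₁ n)⟫_ℂ = 0 := by
      intro v n hn
      rw [hΘ]
      show ⟪adjoint T₀ (J v), P (C₁ n)⟫_ℂ = 0
      rw [adjoint_inner_left T₀ (P (C₁ n)) (J v), hT₀P, hsym, hn, map_zero, inner_zero_right]
    have hΘadd : ∀ v w : K, Θ (v + w) = Θ v + Θ w := by
      intro v w; rw [hΘ]; show adjoint T₀ (J (v+w)) = _
      rw [Jadd, map_add]
    have hΘsmul : ∀ (c : ℂ) (v : K), Θ (c • v) = (starRingEnd ℂ) c • Θ v := by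
      intro c v; rw [hΘ]; show adjoint T₀ (J (c • v)) = _
      rw [Jc, map_smul]
    have hΘnorm : ∀ v : K, ‖Θ v‖ = ‖Q v‖ := by
      intro v
      have h := hΘinner v v
      rw [inner_self_eq_norm_sq_to_K, inner_self_eq_norm_sq_to_K] at h
      have h2 : ‖Θ v‖ ^ 2 = ‖Q v‖ ^ 2 := by exact_mod_cast h
      calc ‖Θ v‖ = Real.sqrt (‖Θ v‖ ^ 2) := (Real.sqrt_sq (norm_nonneg _)).symm
        _ = Real.sqrt (‖Q v‖ ^ 2) := by rw [h2]
        _ = ‖Q v‖ := Real.sqrt_sq (norm_nonneg _)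
    have wd : ∀ v w : K, Q v = Q w → Θ v = Θ w := by
      intro v w h
      have h1 : Θ v - Θ w = Θ (v - w) := by
        rw [sub_eq_add_neg, sub_eq_add_neg, hΘadd]
        congr 1
        have := hΘsmul (-1) w
        simpa using this.symm
      have h2 : ‖Θ v - Θ w‖ = 0 := by
        rw [h1, hΘnorm, map_sub, h, sub_self, norm_zero]
      exact sub_eq_zero.mp (norm_eq_zero.mp h2)
    -- ## Step 8 : the conjugate-linear isometry on U obtained by extending Q u ↦ Θ u
    have memrng : ∀ w : ↥rngQ, ∃ v : K, Q v = (w : K) := fun w => LinearMap.mem_range.mp w.2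
    set φfun : ↥rngQ → H := fun w => Θ (Classical.choose (memrng w)) with hφfun
    have φeq : ∀ (w : ↥rngQ) (v : K), Q v = (w : K) → φfun w = Θ v := by
      intro w v hv
      exact wd _ _ ((Classical.choose_spec (memrng w)).trans hv.symm)
    have φadd : ∀ a b : ↥rngQ, φfun (a + b) = φfun a + φfun b := by
      intro a b
      obtain ⟨va, hva⟩ := memrng a
      obtain ⟨vb, hvb⟩ := memrng b
      rw [φeq a va hva, φeq b vb hvb, φeq (a+b) (va + vb) (by rw [map_add, hva, hvb]; rfl)]
      exact hΘadd va vb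
    have φsmulr : ∀ (r : ℝ) (a : ↥rngQ), φfun (r • a) = r • φfun a := by
      intro r a
      obtain ⟨va, hva⟩ := memrng a
      have h1 : Q (r • va) = ((r • a : ↥rngQ) : K) := by
        rw [ContinuousLinearMap.map_smul_of_tower, hva, Submodule.coe_smul_of_tower]
      rw [φeq a va hva, φeq (r • a) (r • va) h1]
      have h2 : (r : ℂ) • va = r • va := Complex.coe_smul r va
      rw [← h2, hΘsmul, Complex.conj_ofReal, Complex.coe_smul]
    have φnorm : ∀ w : ↥rngQ, ‖φfun w‖ = ‖w‖ := by
      intro w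
      obtain ⟨v, hv⟩ := memrng w
      rw [φeq w v hv, hΘnorm, hv]
      rfl
    set φlin : ↥rngQ →ₗ[ℝ] H :=
      { toFun := φfun, map_add' := φadd, map_smul' := φsmulr } with hφlin
    set φL : ↥rngQ →L[ℝ] H := φlin.mkContinuous 1 (fun w => by rw [one_mul]; exact (φnorm w).le)
      with hφL
    have φLval : ∀ w, φL w = φfun w := fun w => rfl
    set ιL : ↥rngQ →L[ℝ] ↥U :=
      ((Submodule.inclusion hle).restrictScalars ℝ).mkContinuous 1 (fun w => by
        rw [one_mul]; rfl) with hιL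
    have ιval : ∀ w : ↥rngQ, ((ιL w : ↥U) : K) = (w : K) := fun w => rfl
    have ιnorm : ∀ w : ↥rngQ, ‖ιL w‖ = ‖w‖ := fun w => rfl
    have hdenseι : DenseRange ιL := by
      rw [Metric.denseRange_iff]
      intro x ε hε
      have hx : (↑x : K) ∈ closure (rngQ : Set K) := (hmemU ↑x).mp x.2
      obtain ⟨z, hz, hdist⟩ := Metric.mem_closure_iff.mp hx ε hε
      refine ⟨⟨z, hz⟩, ?_⟩
      have hd : dist x (ιL ⟨z, hz⟩) = dist (↑x : K) z := rfl
      rw [hd]; exact hdist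
    have huind : IsUniformInducing ιL :=
      (AddMonoidHomClass.isometry_of_norm ιL ιnorm).isUniformInducing
    set D2U : ↥U →L[ℝ] H := φL.extend ιL with hD2U
    have hD2Uι : ∀ w : ↥rngQ, D2U (ιL w) = φL w := fun w =>
      ContinuousLinearMap.extend_eq (f := φL) (e := ιL) hdenseι huind w
    have hD2UQ : ∀ v : K, D2U ⟨Q v, hQmemU v⟩ = Θ v := by
      intro v
      have h1 : (⟨Q v, hQmemU v⟩ : ↥U) = ιL ⟨Q v, LinearMap.mem_range_self (Q : K →ₗ[ℂ] K) v⟩ :=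
        Subtype.ext rfl
      rw [h1, hD2Uι, φLval, φeq _ v rfl]
    -- properties of D2U by density
    have hD2Uinner1 : ∀ (v : K) (r : ↥U), ⟪D2U r, Θ v⟫_ℂ = ⟪Q v, (r : K)⟫_ℂ := by
      intro v r
      refine DenseRange.induction_on hdenseι r ?_ ?_
      · exact isClosed_eq (D2U.continuous.inner continuous_const)
          (continuous_const.inner continuous_subtype_val)
      · intro w
        obtain ⟨vw, hvw⟩ := memrng w
        show ⟪D2U (ιL w), Θ v⟫_ℂ = ⟪Q v, ((ιL w : ↥U) : K)⟫_ℂ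
        rw [hD2Uι, φLval, φeq w vw hvw, hΘinner, ιval, hvw]
    have hD2Uinner : ∀ r r' : ↥U, ⟪D2U r, D2U r'⟫_ℂ = ⟪(r' : K), (r : K)⟫_ℂ := by
      intro r r'
      refine DenseRange.induction_on hdenseι r' ?_ ?_
      · exact isClosed_eq ((continuous_const.inner (D2U.continuous)))
          ((continuous_subtype_val.inner continuous_const))
      · intro w
        obtain ⟨vw, hvw⟩ := memrng w
        show ⟪D2U r, D2U (ιL w)⟫_ℂ = ⟪((ιL w : ↥U) : K), (r : K)⟫_ℂ
        rw [hD2Uι, φLval, φeq w vw hvw, hD2Uinner1, ιval, hvw]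
    have hD2UT : ∀ r : ↥U, T₀ (D2U r) = Q (J (r : K)) := by
      intro r
      refine DenseRange.induction_on hdenseι r ?_ ?_
      · exact isClosed_eq (T₀.continuous.comp D2U.continuous)
          (Q.continuous.comp (Jcont.comp continuous_subtype_val))
      · intro w
        obtain ⟨vw, hvw⟩ := memrng w
        show T₀ (D2U (ιL w)) = Q (J ((ιL w : ↥U) : K))
        rw [hD2Uι, φLval, φeq w vw hvw, hΘT, ιval, hvw]
    have hD2Uker : ∀ (r : ↥U) (n : K), A n = 0 → ⟪D2U r, P (C₁ n)⟫_ℂ = 0 := by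
      intro r n hn
      refine DenseRange.induction_on hdenseι r ?_ ?_
      · exact isClosed_eq (D2U.continuous.inner continuous_const) continuous_const
      · intro w
        obtain ⟨vw, hvw⟩ := memrng w
        show ⟪D2U (ιL w), P (C₁ n)⟫_ℂ = 0
        rw [hD2Uι, φLval, φeq w vw hvw]
        exact hΘPC vw n hn
    have hD2Usmul : ∀ (c : ℂ) (r : ↥U), D2U (c • r) = (starRingEnd ℂ) c • D2U r := by
      intro c r
      refine DenseRange.induction_on hdenseι r ?_ ?_
      · exact isClosed_eq (D2U.continuous.comp (continuous_const_smul c))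
          ((D2U.continuous).const_smul _)
      · intro w
        obtain ⟨vw, hvw⟩ := memrng w
        show D2U (c • ιL w) = (starRingEnd ℂ) c • D2U (ιL w)
        have h1 : c • ιL w = ιL (c • w) := Subtype.ext rfl
        have h2 : Q (c • vw) = ((c • w : ↥rngQ) : K) := by
          rw [map_smul, hvw]; rfl
        rw [h1, hD2Uι, hD2Uι, φLval, φLval, φeq (c • w) (c • vw) h2, φeq w vw hvw, hΘsmul]
    -- ## Step 9 : the full conjugate-linear map D₂
    set D₂f : K → H := fun y => D2U (πU y) + P (C₁ ↑(πO y)) with hD₂f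
    have hPC₁ : ∀ n n' : K, A n = 0 → A n' = 0 →
        ⟪P (C₁ n), P (C₁ n')⟫_ℂ = ⟪n', n⟫_ℂ := by
      intro n n' hn hn'
      have hPm : ∀ a b : H, ⟪P a, b⟫_ℂ = ⟪a, P b⟫_ℂ := by
        intro a b
        conv_lhs => rw [← isSelfAdjoint_iff'.mp hPsa]
        exact adjoint_inner_left P b a
      rw [hPm]
      have hPP : P (P (C₁ n')) = C₁ n' - A (adjoint A (C₁ n')) := by
        have h := congrArg (fun f : H →L[ℂ] H => f (C₁ n')) hP2
        simpa using h
      have hz : adjoint A (C₁ n') = 0 := by rw [hsym, hn', map_zero]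
      rw [hPP, hz, map_zero, inner_sub_right, inner_zero_right, sub_zero, hpair, hC]
    have hT₀PC : ∀ n : K, A n = 0 → T₀ (P (C₁ n)) = 0 := by
      intro n hn
      rw [hT₀P, hsym, hn, map_zero]
    have F1 : ∀ y y' : K, ⟪D₂f y, D₂f y'⟫_ℂ = ⟪y', y⟫_ℂ := by
      intro y y'
      rw [hD₂f]
      show ⟪D2U (πU y) + P (C₁ ↑(πO y)), D2U (πU y') + P (C₁ ↑(πO y'))⟫_ℂ = _
      rw [inner_add_left, inner_add_right, inner_add_right]
      rw [hD2Uinner (πU y) (πU y'), hD2Uker (πU y) _ (hAn y')]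
      have hcross : ⟪P (C₁ ↑(πO y)), D2U (πU y')⟫_ℂ = 0 := by
        rw [← inner_conj_symm, hD2Uker (πU y') _ (hAn y), map_zero]
      rw [hcross, hPC₁ _ _ (hAn y) (hAn y')]
      conv_rhs => rw [← hdecomp y, ← hdecomp y']
      rw [inner_add_left, inner_add_right, inner_add_right]
      rw [Submodule.inner_right_of_mem_orthogonal (SetLike.coe_mem (πU y')) (SetLike.coe_mem (πO y)),
        Submodule.inner_left_of_mem_orthogonal (SetLike.coe_mem (πU y)) (SetLike.coe_mem (πO y'))]
    have hD₂norm : ∀ y : K, ‖D₂f y‖ = ‖y‖ := by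
      intro y
      have h := F1 y y
      rw [inner_self_eq_norm_sq_to_K, inner_self_eq_norm_sq_to_K] at h
      have h2 : ‖D₂f y‖ ^ 2 = ‖y‖ ^ 2 := by exact_mod_cast h
      calc ‖D₂f y‖ = Real.sqrt (‖D₂f y‖ ^ 2) := (Real.sqrt_sq (norm_nonneg _)).symm
        _ = Real.sqrt (‖y‖ ^ 2) := by rw [h2]
        _ = ‖y‖ := Real.sqrt_sq (norm_nonneg _)
    have D₂add : ∀ y y' : K, D₂f (y + y') = D₂f y + D₂f y' := by
      intro y y'
      rw [hD₂f]
      show D2U (πU (y + y')) + P (C₁ ↑(πO (y + y'))) = _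
      have h1 : πU (y + y') = πU y + πU y' := map_add _ _ _
      have h2 : (↑(πO (y + y')) : K) = ↑(πO y) + ↑(πO y') := by rw [map_add]; rfl
      rw [h1, h2, map_add, map_add, map_add]
      beta_reduce; abel
    have D₂smul : ∀ (c : ℂ) (y : K), D₂f (c • y) = (starRingEnd ℂ) c • D₂f y := by
      intro c y
      rw [hD₂f]
      show D2U (πU (c • y)) + P (C₁ ↑(πO (c • y))) = _
      have h1 : πU (c • y) = c • πU y := map_smul _ _ _
      have h2 : (↑(πO (c • y)) : K) = c • ↑(πO y) := by rw [map_smul]; rfl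
      rw [h1, h2, hD2Usmul, ContinuousLinearMap.map_smulₛₗ C₁, map_smul, smul_add]
    -- ## Step 10 : the symmetry identity
    have hMy : ∀ y : K, T₀ (D₂f y) = Q (J ↑(πU y)) := by
      intro y
      rw [hD₂f]
      show T₀ (D2U (πU y) + P (C₁ ↑(πO y))) = _
      rw [map_add, hD2UT, hT₀PC _ (hAn y), add_zero]
    have hJQdec : ∀ y : K, J (Q y) = Q (J ↑(πU y)) := by
      intro y
      conv_lhs => rw [← hdecomp y]
      rw [map_add, hQn, add_zero, JQ]
    have F2 : ∀ y y' : K, ⟪T₀ (D₂f y), y'⟫_ℂ = ⟪T₀ (D₂f y'), y⟫_ℂ := by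
      intro y y'
      rw [hMy, hMy]
      have hmemQ : Q (J ↑(πU y')) ∈ U := hQmemU _
      have hself : (↑(πU (Q (J ↑(πU y')))) : K) = Q (J ↑(πU y')) :=
        Submodule.starProjection_eq_self_iff.mpr hmemQ
      calc ⟪Q (J ↑(πU y)), y'⟫_ℂ = ⟪J ↑(πU y), Q y'⟫_ℂ := hQm _ _
        _ = ⟪J (Q y'), ↑(πU y)⟫_ℂ := Jsym _ _
        _ = ⟪Q (J ↑(πU y')), ↑(πU y)⟫_ℂ := by rw [hJQdec]
        _ = ⟪↑(πU (Q (J ↑(πU y')))), y⟫_ℂ := by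
              exact (Submodule.inner_starProjection_left_eq_right U _ _).symm
        _ = ⟪Q (J ↑(πU y')), y⟫_ℂ := by rw [hself]
    -- ## Step 11 : the conjugate-adjoint D₁ of D₂ via Riesz representation
    have hbound : ∀ (x : H) (y : K), ‖⟪D₂f y, x⟫_ℂ‖ ≤ ‖x‖ * ‖y‖ := by
      intro x y
      calc ‖⟪D₂f y, x⟫_ℂ‖ ≤ ‖D₂f y‖ * ‖x‖ := norm_inner_le_norm _ _
        _ = ‖x‖ * ‖y‖ := by rw [hD₂norm]; ring
    set ℓ : H → (K →L[ℂ] ℂ) := fun x =>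
      LinearMap.mkContinuous
        { toFun := fun y => ⟪D₂f y, x⟫_ℂ
          map_add' := by
            intro a b
            show ⟪D₂f (a + b), x⟫_ℂ = ⟪D₂f a, x⟫_ℂ + ⟪D₂f b, x⟫_ℂ
            rw [D₂add, inner_add_left]
          map_smul' := by
            intro c a
            show ⟪D₂f (c • a), x⟫_ℂ = (RingHom.id ℂ) c • ⟪D₂f a, x⟫_ℂ
            rw [D₂smul, inner_smul_left, Complex.conj_conj]
            simp } ‖x‖ (fun y => hbound x y) with hℓ
    have hℓval : ∀ (x : H) (y : K), ℓ x y = ⟪D₂f y, x⟫_ℂ := fun x y => rfl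
    set D₁f : H → K := fun x => (InnerProductSpace.toDual ℂ K).symm (ℓ x) with hD₁f
    have hD₁ : ∀ (x : H) (y : K), ⟪D₁f x, y⟫_ℂ = ⟪D₂f y, x⟫_ℂ := by
      intro x y
      rw [hD₁f]
      exact InnerProductSpace.toDual_symm_apply
    have D₁add : ∀ x x' : H, D₁f (x + x') = D₁f x + D₁f x' := by
      intro x x'
      refine ext_inner_right ℂ fun v => ?_
      rw [inner_add_left, hD₁, hD₁, hD₁, inner_add_right]
    have D₁smul : ∀ (c : ℂ) (x : H), D₁f (c • x) = (starRingEnd ℂ) c • D₁f x := by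
      intro c x
      refine ext_inner_right ℂ fun v => ?_
      rw [inner_smul_left, hD₁, hD₁, inner_smul_right, Complex.conj_conj]
    -- ## Step 12 : conclusion
    refine ⟨{ toFun := D₁f, map_add' := D₁add, map_smul' := D₁smul },
            { toFun := D₂f, map_add' := D₂add, map_smul' := D₂smul }, ?_, ?_, ?_⟩
    · intro y
      show D₁f (D₂f y) = y
      refine ext_inner_right ℂ fun v => ?_
      rw [hD₁, F1]
    · intro x y
      show ⟪D₁f x, y⟫_ℂ = ⟪D₂f y, x⟫_ℂ
      exact hD₁ x y
    · intro y
      refine ⟨iff_of_true (by rw [hdomtop]; trivial) (hadjdom y), ?_⟩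
      intro h2 h1
      rw [hTval _ h2, hadjval y h1]
      show T₀ (D₂f y) = D₁f (adjoint T₀ y)
      refine ext_inner_right ℂ fun v => ?_
      rw [hD₁, F2 y v, adjoint_inner_right]
end

section
/- Let H, K be infinite-dimensional separable complex Hilbert spaces. Then the set CSO_b of bounded complex symmetric operators from H to K is dense in B(H,K) in the strong-* topology; consequently it is also dense in the strong operator topology and the weak operator topology. -/
open scoped InnerProductSpace

/-- A bounded operator `T : H →L K` is complex symmetric if there is a conjugation pair
`(C₁, C₂)` from `H` to `K` (conjugate-linear `C₁ : H → K`, `C₂ : K → H` with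
`⟪C₁x, y⟫ = ⟪C₂y, x⟫` and `C₂C₁ = id_H` or `C₁C₂ = id_K`) with `C₂T = T*C₁`
(respectively `TC₂ = C₁T*`). -/
def ContinuousLinearMap.IsComplexSymmetric
    {H K : Type*} [NormedAddCommGroup H] [InnerProductSpace ℂ H] [CompleteSpace H]
    [NormedAddCommGroup K] [InnerProductSpace ℂ K] [CompleteSpace K]
    (T : H →L[ℂ] K) : Prop :=
  ∃ (C₁ : H →ₗ⋆[ℂ] K) (C₂ : K →ₗ⋆[ℂ] H),
    (∀ (x : H) (y : K), ⟪C₁ x, y⟫_ℂ = ⟪C₂ y, x⟫_ℂ) ∧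
    (((∀ x : H, C₂ (C₁ x) = x) ∧
        ∀ x : H, C₂ (T x) = ContinuousLinearMap.adjoint T (C₁ x)) ∨
      ((∀ y : K, C₁ (C₂ y) = y) ∧
        ∀ y : K, T (C₂ y) = C₁ (ContinuousLinearMap.adjoint T y)))

open scoped InnerProductSpace

noncomputable section

private theorem orthonormal_countable' {E : Type*} [NormedAddCommGroup E] [InnerProductSpace ℂ E]
    [TopologicalSpace.SeparableSpace E] {ι : Type*} {v : ι → E} (hv : Orthonormal ℂ v) :
    Countable ι := by
  haveI : SecondCountableTopology E := UniformSpace.secondCountable_of_separable E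
  letI : TopologicalSpace ι := ⊥
  haveI : DiscreteTopology ι := ⟨rfl⟩
  have hpair : Pairwise fun i j : ι => (1:ℝ) ≤ dist (v i) (v j) := by
    intro i j hij
    have h0 : ⟪v i, v j⟫_ℂ = 0 := hv.2 hij
    have h1 : ‖v i‖ = 1 := hv.1 i
    have h2 : ‖v j‖ = 1 := hv.1 j
    rw [dist_eq_norm]
    have hsq := @norm_sub_sq ℂ E _ _ _ (v i) (v j)
    rw [h0, h1, h2] at hsq
    simp at hsq
    nlinarith [norm_nonneg (v i - v j)]
  have hemb := Metric.isClosedEmbedding_of_pairwise_le_dist (α := ι) one_pos hpair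
  haveI : SecondCountableTopology ι := hemb.toIsEmbedding.secondCountableTopology
  haveI : TopologicalSpace.SeparableSpace ι := inferInstance
  exact TopologicalSpace.separableSpace_iff_countable.mp inferInstance

private theorem exists_hilbertBasis_nat' (E : Type*) [NormedAddCommGroup E]
    [InnerProductSpace ℂ E] [CompleteSpace E] [TopologicalSpace.SeparableSpace E]
    (hE : ¬ FiniteDimensional ℂ E) : Nonempty (HilbertBasis ℕ ℂ E) := by
  obtain ⟨w, b, hb⟩ := exists_hilbertBasis ℂ E
  haveI : Countable w := orthonormal_countable' b.orthonormal
  haveI : Infinite w := by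
    rw [Set.infinite_coe_iff]
    intro hfin
    apply hE
    have hsp : Set.range ⇑b = (w : Set E) := by rw [hb]; exact Subtype.range_coe
    haveI hfd : FiniteDimensional ℂ (Submodule.span ℂ (Set.range ⇑b)) := by
      rw [hsp]; exact FiniteDimensional.span_of_finite ℂ hfin
    have hclosed : IsClosed ((Submodule.span ℂ (Set.range ⇑b)) : Set E) :=
      Submodule.closed_of_finiteDimensional _
    have htop : (Submodule.span ℂ (Set.range ⇑b)) = ⊤ := by
      have := b.dense_span
      rwa [hclosed.submodule_topologicalClosure_eq] at this
    have : FiniteDimensional ℂ (⊤ : Submodule ℂ E) := htop ▸ hfd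
    exact (Submodule.topEquiv (R := ℂ) (M := E)).finiteDimensional
  obtain ⟨d⟩ := nonempty_denumerable w
  set e : ℕ ≃ w := (@Denumerable.eqv w d).symm with he
  have hon : Orthonormal ℂ (fun n => b (e n)) := b.orthonormal.comp e e.injective
  refine ⟨HilbertBasis.mk hon ?_⟩
  have hr : Set.range (fun n => b (e n)) = Set.range ⇑b := by
    exact Set.range_comp b e ▸ by rw [Set.range_eq_univ.mpr e.surjective, Set.image_univ]
  rw [hr, b.dense_span]

private theorem exists_antiunitary' (E F : Type*) [NormedAddCommGroup E]
    [InnerProductSpace ℂ E] [CompleteSpace E] [TopologicalSpace.SeparableSpace E]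
    [NormedAddCommGroup F] [InnerProductSpace ℂ F] [CompleteSpace F]
    [TopologicalSpace.SeparableSpace F]
    (hE : ¬ FiniteDimensional ℂ E) (hF : ¬ FiniteDimensional ℂ F) :
    ∃ (a : E →ₗ⋆[ℂ] F) (a' : F →ₗ⋆[ℂ] E),
      (∀ (w : E) (v : F), ⟪a w, v⟫_ℂ = ⟪a' v, w⟫_ℂ) ∧
      (∀ w : E, a' (a w) = w) ∧ (∀ v : F, a (a' v) = v) := by
  obtain ⟨bE⟩ := exists_hilbertBasis_nat' E hE
  obtain ⟨bF⟩ := exists_hilbertBasis_nat' F hF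
  refine ⟨⟨⟨fun x => bF.repr.symm (star (bE.repr x)), ?_⟩, ?_⟩,
          ⟨⟨fun y => bE.repr.symm (star (bF.repr y)), ?_⟩, ?_⟩, ?_, ?_, ?_⟩
  · intro x y; simp [star_add]
  · intro c x; simp [star_smul]
  · intro x y; simp [star_add]
  · intro c x; simp [star_smul]
  · intro w v
    simp only [LinearMap.coe_mk, AddHom.coe_mk]
    have keyF : ∀ (u) (v : F), ⟪(bF.repr.symm u : F), v⟫_ℂ = ⟪u, bF.repr v⟫_ℂ := by
      intro u v
      calc ⟪bF.repr.symm u, v⟫_ℂ = ⟪bF.repr.symm u, bF.repr.symm (bF.repr v)⟫_ℂ := by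
            rw [LinearIsometryEquiv.symm_apply_apply]
        _ = ⟪u, bF.repr v⟫_ℂ := bF.repr.symm.inner_map_map _ _
    have keyE : ∀ (u) (w : E), ⟪(bE.repr.symm u : E), w⟫_ℂ = ⟪u, bE.repr w⟫_ℂ := by
      intro u w
      calc ⟪bE.repr.symm u, w⟫_ℂ = ⟪bE.repr.symm u, bE.repr.symm (bE.repr w)⟫_ℂ := by
            rw [LinearIsometryEquiv.symm_apply_apply]
        _ = ⟪u, bE.repr w⟫_ℂ := bE.repr.symm.inner_map_map _ _
    rw [keyF, keyE]
    rw [lp.inner_eq_tsum, lp.inner_eq_tsum]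
    congr 1
    ext i
    simp [RCLike.inner_apply, mul_comm]
  · intro w
    simp
  · intro v
    simp

set_option synthInstance.maxHeartbeats 1000000 in
open Submodule in
private theorem decomp_span_orthonormal {X : Type*} [NormedAddCommGroup X]
    [InnerProductSpace ℂ X] [CompleteSpace X] {κ : Type*} [Fintype κ] {g : κ → X}
    (hg : Orthonormal ℂ g) (x : X) :
    x = (∑ k, ⟪g k, x⟫_ℂ • g k) +
      ((orthogonalProjection (span ℂ (Set.range g))ᗮ x : X)) := by
  classical
  haveI : FiniteDimensional ℂ (span ℂ (Set.range g)) :=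
    FiniteDimensional.span_of_finite ℂ (Set.finite_range g)
  haveI : CompleteSpace (span ℂ (Set.range g)) := FiniteDimensional.complete ℂ _
  have hmem : (∑ k, ⟪g k, x⟫_ℂ • g k) ∈ span ℂ (Set.range g) :=
    Submodule.sum_mem _ fun k _ => Submodule.smul_mem _ _ (subset_span ⟨k, rfl⟩)
  have hsub : x - (∑ k, ⟪g k, x⟫_ℂ • g k) ∈ (span ℂ (Set.range g))ᗮ := by
    rw [Submodule.mem_orthogonal]
    intro u hu
    induction hu using Submodule.span_induction with
    | mem z hz =>
        obtain ⟨j, rfl⟩ := hz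
        rw [inner_sub_right, inner_sum]
        simp [inner_smul_right, orthonormal_iff_ite.mp hg, Finset.sum_ite_eq']
    | zero => simp
    | add u v _ _ hu hv => rw [inner_add_left, hu, hv, add_zero]
    | smul c u _ hu => rw [inner_smul_left, hu, mul_zero]
  have hproj : (orthogonalProjection (span ℂ (Set.range g)) x : X)
      = ∑ k, ⟪g k, x⟫_ℂ • g k :=
    Submodule.eq_starProjection_of_mem_orthogonal hmem hsub
  have h : ((orthogonalProjection (span ℂ (Set.range g)) x : X)) +
      ((orthogonalProjection (span ℂ (Set.range g))ᗮ x : X)) = x :=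
    Submodule.starProjection_add_starProjection_orthogonal (K := span ℂ (Set.range g)) x
  rw [hproj] at h
  exact h.symm

set_option synthInstance.maxHeartbeats 1000000 in
set_option maxHeartbeats 2000000 in
open Submodule in
private theorem isComplexSymmetric_of_diag
    {H K : Type*} [NormedAddCommGroup H] [InnerProductSpace ℂ H] [CompleteSpace H]
    [TopologicalSpace.SeparableSpace H]
    [NormedAddCommGroup K] [InnerProductSpace ℂ K] [CompleteSpace K]
    [TopologicalSpace.SeparableSpace K]
    (hH : ¬ FiniteDimensional ℂ H) (hK : ¬ FiniteDimensional ℂ K)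
    {κ : Type*} [Fintype κ] {e : κ → H} {f : κ → K} (he : Orthonormal ℂ e)
    (hf : Orthonormal ℂ f) (s : κ → ℝ) (T : H →L[ℂ] K)
    (hT : ∀ x, T x = ∑ k, ((s k : ℂ) * ⟪e k, x⟫_ℂ) • f k) :
    T.IsComplexSymmetric := by
  classical
  set M₀ : Submodule ℂ H := span ℂ (Set.range e) with hM₀
  set M₁ : Submodule ℂ K := span ℂ (Set.range f) with hM₁
  haveI : FiniteDimensional ℂ M₀ := FiniteDimensional.span_of_finite ℂ (Set.finite_range e)
  haveI : FiniteDimensional ℂ M₁ := FiniteDimensional.span_of_finite ℂ (Set.finite_range f)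
  haveI : CompleteSpace M₀ := FiniteDimensional.complete ℂ _
  haveI : CompleteSpace M₁ := FiniteDimensional.complete ℂ _
  haveI : SecondCountableTopology H := UniformSpace.secondCountable_of_separable H
  haveI : SecondCountableTopology K := UniformSpace.secondCountable_of_separable K
  haveI : TopologicalSpace.SeparableSpace ↥M₀ᗮ :=
    TopologicalSpace.SecondCountableTopology.to_separableSpace
  haveI : TopologicalSpace.SeparableSpace ↥M₁ᗮ :=
    TopologicalSpace.SecondCountableTopology.to_separableSpace
  have hE : ¬ FiniteDimensional ℂ ↥M₀ᗮ := by
    intro hfd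
    apply hH
    have hsup : M₀ ⊔ M₀ᗮ = ⊤ := Submodule.sup_orthogonal_of_hasOrthogonalProjection
    haveI : FiniteDimensional ℂ ↥(M₀ ⊔ M₀ᗮ) := Submodule.finiteDimensional_sup M₀ M₀ᗮ
    rw [hsup] at this
    exact (Submodule.topEquiv (R := ℂ) (M := H)).finiteDimensional
  have hF : ¬ FiniteDimensional ℂ ↥M₁ᗮ := by
    intro hfd
    apply hK
    have hsup : M₁ ⊔ M₁ᗮ = ⊤ := Submodule.sup_orthogonal_of_hasOrthogonalProjection
    haveI : FiniteDimensional ℂ ↥(M₁ ⊔ M₁ᗮ) := Submodule.finiteDimensional_sup M₁ M₁ᗮ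
    rw [hsup] at this
    exact (Submodule.topEquiv (R := ℂ) (M := K)).finiteDimensional
  obtain ⟨a, a', ha, haa, haa'⟩ := exists_antiunitary' ↥M₀ᗮ ↥M₁ᗮ hE hF
  -- membership facts
  have h_e : ∀ k, e k ∈ M₀ := fun k => subset_span ⟨k, rfl⟩
  have h_f : ∀ k, f k ∈ M₁ := fun k => subset_span ⟨k, rfl⟩
  have hEe : ∀ (w : ↥M₀ᗮ) (j : κ), ⟪e j, (w : H)⟫_ℂ = 0 := fun w j =>
    (Submodule.mem_orthogonal M₀ (w : H)).mp w.2 (e j) (h_e j)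
  have hEe' : ∀ (w : ↥M₀ᗮ) (j : κ), ⟪(w : H), e j⟫_ℂ = 0 := fun w j =>
    inner_eq_zero_symm.mp (hEe w j)
  have hFf : ∀ (v : ↥M₁ᗮ) (j : κ), ⟪f j, (v : K)⟫_ℂ = 0 := fun v j =>
    (Submodule.mem_orthogonal M₁ (v : K)).mp v.2 (f j) (h_f j)
  have hFf' : ∀ (v : ↥M₁ᗮ) (j : κ), ⟪(v : K), f j⟫_ℂ = 0 := fun v j =>
    inner_eq_zero_symm.mp (hFf v j)
  --定义 C₁ C₂
  set PE : H →L[ℂ] ↥M₀ᗮ := orthogonalProjection M₀ᗮ with hPE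
  set PF : K →L[ℂ] ↥M₁ᗮ := orthogonalProjection M₁ᗮ with hPF
  refine ⟨⟨⟨fun x => (∑ k, ⟪x, e k⟫_ℂ • f k) + ((a (PE x) : K)), ?_⟩, ?_⟩,
         ⟨⟨fun y => (∑ k, ⟪y, f k⟫_ℂ • e k) + ((a' (PF y) : H)), ?_⟩, ?_⟩, ?_,
         Or.inl ⟨?_, ?_⟩⟩
  · intro x x'
    simp [inner_add_left, add_smul, Finset.sum_add_distrib]
    abel
  · intro c x
    simp [inner_smul_left, mul_smul, Finset.smul_sum, smul_add, map_smulₛₗ]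
    exact Finset.sum_congr rfl fun k _ => smul_comm _ _ _
  · intro y y'
    simp [inner_add_left, add_smul, Finset.sum_add_distrib]
    abel
  · intro c y
    simp [inner_smul_left, mul_smul, Finset.smul_sum, smul_add, map_smulₛₗ]
    exact Finset.sum_congr rfl fun k _ => smul_comm _ _ _
  · -- inner compatibility
    intro x y
    simp only [LinearMap.coe_mk, AddHom.coe_mk]
    have hdx := decomp_span_orthonormal he x
    have hdy := decomp_span_orthonormal hf y
    have haw : ∀ w : ↥M₀ᗮ, ⟪(a w : K), y⟫_ℂ = ⟪(a' (PF y) : H), (w : H)⟫_ℂ := by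
      intro w
      conv_lhs => rw [hdy]
      rw [inner_add_right, inner_sum]
      simp only [inner_smul_right, hFf' (a w)]
      simp only [mul_zero, Finset.sum_const_zero, zero_add]
      rw [← Submodule.coe_inner, ha w (PF y), Submodule.coe_inner]
    rw [inner_add_left, inner_add_left, sum_inner, sum_inner, haw (PE x)]
    have hvx : ∀ v : ↥M₀ᗮ, ⟪(v : H), x⟫_ℂ = ⟪(v : H), ((PE x : H) : H)⟫_ℂ := by
      intro v
      conv_lhs => rw [hdx]
      rw [inner_add_right, inner_sum]
      simp only [inner_smul_right, hEe' v, mul_zero, Finset.sum_const_zero, zero_add]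
      rfl
    rw [hvx (a' (PF y))]
    congr 1
    refine Finset.sum_congr rfl fun k _ => ?_
    rw [inner_smul_left, inner_smul_left, inner_conj_symm, inner_conj_symm]
    ring
  · -- C₂ ∘ C₁ = id
    intro x
    simp only [LinearMap.coe_mk, AddHom.coe_mk]
    have hC1f : ∀ j, ⟪(∑ k, ⟪x, e k⟫_ℂ • f k) + ((a (PE x) : K)), f j⟫_ℂ
        = ⟪e j, x⟫_ℂ := by
      intro j
      rw [inner_add_left, sum_inner, hFf' (a (PE x)) j, add_zero]
      simp [inner_smul_left, orthonormal_iff_ite.mp hf, Finset.sum_ite_eq']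
    have hPF1 : PF ((∑ k, ⟪x, e k⟫_ℂ • f k) + ((a (PE x) : K))) = a (PE x) := by
      rw [map_add]
      have h1 : PF (∑ k, ⟪x, e k⟫_ℂ • f k) = 0 :=
        orthogonalProjection_mem_subspace_orthogonalComplement_eq_zero
          (M₁.le_orthogonal_orthogonal (Submodule.sum_mem _ fun k _ =>
            Submodule.smul_mem _ _ (h_f k)))
      have h2 : PF ((a (PE x) : K)) = a (PE x) :=
        orthogonalProjection_mem_subspace_eq_self _
      rw [h1, h2, zero_add]
    rw [hPF1, haa (PE x)]
    simp_rw [hC1f]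
    exact (decomp_span_orthonormal he x).symm
  · -- intertwining
    intro x
    simp only [LinearMap.coe_mk, AddHom.coe_mk]
    have hPFT : PF (T x) = 0 := by
      rw [hT x]
      exact orthogonalProjection_mem_subspace_orthogonalComplement_eq_zero
        (M₁.le_orthogonal_orthogonal (Submodule.sum_mem _ fun k _ =>
          Submodule.smul_mem _ _ (h_f k)))
    have hTf : ∀ j, ⟪T x, f j⟫_ℂ = (s j : ℂ) * ⟪x, e j⟫_ℂ := by
      intro j
      rw [hT x, sum_inner]
      simp only [inner_smul_left, orthonormal_iff_ite.mp hf, map_mul,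
        Complex.conj_ofReal, inner_conj_symm]
      rw [Finset.sum_eq_single j]
      · simp
      · intro k _ hk
        simp [if_neg hk]
      · intro h
        exact absurd (Finset.mem_univ j) h
    rw [hPFT, map_zero]
    apply ext_inner_left ℂ
    intro z
    rw [ContinuousLinearMap.adjoint_inner_right, hT z]
    simp only [inner_add_right, inner_sum, sum_inner, inner_smul_right, inner_smul_left,
      hTf, map_mul, Complex.conj_ofReal, inner_conj_symm, orthonormal_iff_ite.mp hf,
      hFf (a (PE x)), Submodule.coe_zero, inner_zero_right, add_zero, mul_ite, mul_one,
      mul_zero, Finset.sum_ite_eq', Finset.mem_univ, if_true]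
    rw [Finset.sum_const_zero, add_zero]
    refine Finset.sum_congr rfl fun k _ => ?_
    ring

set_option synthInstance.maxHeartbeats 1000000 in
set_option maxHeartbeats 2000000 in
open Submodule ContinuousLinearMap in
private theorem exists_exact_approx
    {H K : Type*} [NormedAddCommGroup H] [InnerProductSpace ℂ H] [CompleteSpace H]
    [TopologicalSpace.SeparableSpace H]
    [NormedAddCommGroup K] [InnerProductSpace ℂ K] [CompleteSpace K]
    [TopologicalSpace.SeparableSpace K]
    (hH : ¬ FiniteDimensional ℂ H) (hK : ¬ FiniteDimensional ℂ K)
    (T : H →L[ℂ] K) (n : ℕ) (x : Fin n → H) (y : Fin n → K) :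
    ∃ T' : H →L[ℂ] K, T'.IsComplexSymmetric ∧ (∀ i, T' (x i) = T (x i)) ∧
      (∀ i, adjoint T' (y i) = adjoint T (y i)) := by
  classical
  set M : Submodule ℂ H :=
    span ℂ (Set.range x ∪ Set.range (fun i => adjoint T (y i))) with hM
  haveI : FiniteDimensional ℂ M := FiniteDimensional.span_of_finite ℂ
    ((Set.finite_range x).union (Set.finite_range _))
  haveI : CompleteSpace M := FiniteDimensional.complete ℂ _
  set A : M →L[ℂ] K := T.comp M.subtypeL with hA
  set S : M →L[ℂ] M := (adjoint A).comp A with hSdef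
  have hS : (S : M →ₗ[ℂ] M).IsSymmetric := by
    intro u v
    show ⟪adjoint A (A u), v⟫_ℂ = ⟪u, adjoint A (A v)⟫_ℂ
    rw [adjoint_inner_left, adjoint_inner_right]
  set m := Module.finrank ℂ M with hmdef
  have hm : Module.finrank ℂ M = m := rfl
  set e : OrthonormalBasis (Fin m) ℂ M := hS.eigenvectorBasis hm with he
  have heig : ∀ i, S (e i) = (hS.eigenvalues hm i : ℂ) • e i := fun i =>
    hS.apply_eigenvectorBasis hm i
  have hAA : ∀ i j, ⟪A (e i), A (e j)⟫_ℂ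
      = if i = j then ((hS.eigenvalues hm j : ℂ)) else 0 := by
    intro i j
    rw [← adjoint_inner_right]
    have : adjoint A (A (e j)) = S (e j) := rfl
    rw [this, heig j, inner_smul_right, orthonormal_iff_ite.mp e.orthonormal]
    by_cases hij : i = j <;> simp [hij]
  set κ := {k : Fin m // A (e k) ≠ 0} with hκ
  set f : κ → K := fun k => (‖A (e k.1)‖ : ℂ)⁻¹ • A (e k.1) with hfdef
  set e' : κ → H := fun k => ((e k.1 : M) : H) with he'def
  have he' : Orthonormal ℂ e' := by
    rw [orthonormal_iff_ite]
    intro i j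
    have h := orthonormal_iff_ite.mp e.orthonormal i.1 j.1
    have hco : ⟪e' i, e' j⟫_ℂ = ⟪e i.1, e j.1⟫_ℂ := rfl
    rw [hco, h]
    by_cases hij : i = j
    · simp [hij]
    · have : i.1 ≠ j.1 := fun hh => hij (Subtype.ext hh)
      simp [if_neg this, if_neg hij]
  have hnormsq : ∀ k : Fin m, ((‖A (e k)‖ : ℂ))^2 = ((hS.eigenvalues hm k : ℝ) : ℂ) := by
    intro k
    have h5 := inner_self_eq_norm_sq_to_K (𝕜 := ℂ) (x := A (e k))
    rw [hAA k k, if_pos rfl] at h5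
    exact h5.symm
  have hf : Orthonormal ℂ f := by
    rw [orthonormal_iff_ite]
    intro i j
    have hfi : ⟪f i, f j⟫_ℂ
        = (‖A (e i.1)‖ : ℂ)⁻¹ * ((‖A (e j.1)‖ : ℂ))⁻¹ * ⟪A (e i.1), A (e j.1)⟫_ℂ := by
      rw [hfdef]
      simp only [inner_smul_left, inner_smul_right, map_inv₀, Complex.conj_ofReal]
      ring
    rw [hfi, hAA i.1 j.1]
    by_cases hij : i = j
    · subst hij
      have hne : (‖A (e i.1)‖ : ℂ) ≠ 0 := by
        simpa using norm_ne_zero_iff.mpr i.2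
      rw [if_pos rfl, if_pos rfl, ← hnormsq i.1]
      field_simp
    · have h1 : i.1 ≠ j.1 := fun hh => hij (Subtype.ext hh)
      rw [if_neg h1, if_neg hij, mul_zero]
  set s : κ → ℝ := fun k => ‖A (e k.1)‖ with hsdef
  set T' : H →L[ℂ] K := A.comp (orthogonalProjection M) with hT'
  have hdiag : ∀ z, T' z = ∑ k : κ, ((s k : ℂ) * ⟪e' k, z⟫_ℂ) • f k := by
    intro z
    have hPz := e.sum_repr' (orthogonalProjection M z)
    have step1 : T' z = ∑ i, ⟪(e i : H), z⟫_ℂ • A (e i) := by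
      show A (orthogonalProjection M z) = _
      conv_lhs => rw [← hPz]
      rw [map_sum]
      refine Finset.sum_congr rfl fun i _ => ?_
      rw [map_smul, inner_orthogonalProjection_eq_of_mem_left]
    have step2 : ∑ i, ⟪(e i : H), z⟫_ℂ • A (e i)
        = ∑ k : κ, ⟪(e k.1 : H), z⟫_ℂ • A (e k.1) := by
      rw [← Finset.sum_filter_of_ne (p := fun i => A (e i) ≠ 0)
        (by intro i _ hne hAz; exact hne (by rw [hAz, smul_zero]))]
      rw [Finset.sum_subtype (p := fun i => A (e i) ≠ 0)
        (Finset.univ.filter fun i => A (e i) ≠ 0)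
        (by intro i; simp) (fun i => ⟪(e i : H), z⟫_ℂ • A (e i))]
    rw [step1, step2]
    refine Finset.sum_congr rfl fun k _ => ?_
    have hAe : A (e k.1) = (s k : ℂ) • f k := by
      rw [hfdef, hsdef]
      rw [smul_inv_smul₀]
      simpa using norm_ne_zero_iff.mpr k.2
    rw [hAe, mul_smul, smul_comm]
  have hCS := isComplexSymmetric_of_diag hH hK he' hf s T' hdiag
  refine ⟨T', hCS, ?_, ?_⟩
  · intro i
    have hxm : x i ∈ M := subset_span (Or.inl ⟨i, rfl⟩)
    show T ((orthogonalProjection M (x i) : M) : H) = T (x i)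
    congr 1
    exact Submodule.starProjection_eq_self_iff.mpr hxm
  · intro i
    have hym : adjoint T (y i) ∈ M := subset_span (Or.inr ⟨i, rfl⟩)
    apply ext_inner_left ℂ
    intro z
    rw [adjoint_inner_right, adjoint_inner_right]
    have h1 : ⟪T' z, y i⟫_ℂ
        = ⟪((orthogonalProjection M z : M) : H), adjoint T (y i)⟫_ℂ := by
      show ⟪T ((orthogonalProjection M z : M) : H), y i⟫_ℂ = _
      rw [← adjoint_inner_right T]
    have h2 : ⟪((orthogonalProjection M z : M) : H), adjoint T (y i)⟫_ℂ
        = ⟪z, adjoint T (y i)⟫_ℂ := by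
      have h3 := inner_orthogonalProjection_eq_of_mem_right (K := M) (⟨adjoint T (y i), hym⟩ : M) z
      have h4 : ⟪orthogonalProjection M z, (⟨adjoint T (y i), hym⟩ : M)⟫_ℂ
          = ⟪((orthogonalProjection M z : M) : H), adjoint T (y i)⟫_ℂ :=
        Submodule.coe_inner _ _ _
      rw [← h4, h3]
    rw [h1, h2, ← adjoint_inner_right T]

/-- For infinite-dimensional separable complex Hilbert spaces `H, K`, the set
of bounded complex symmetric operators is dense in `B(H,K)` in the strong-* topology (every
basic strong-* neighborhood of any `T` meets it); consequently it is also dense in the strong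
operator topology and in the weak operator topology. -/
theorem cso_bounded_dense_strong_star
    {H K : Type*} [NormedAddCommGroup H] [InnerProductSpace ℂ H] [CompleteSpace H]
    [TopologicalSpace.SeparableSpace H]
    [NormedAddCommGroup K] [InnerProductSpace ℂ K] [CompleteSpace K]
    [TopologicalSpace.SeparableSpace K]
    (hH : ¬ FiniteDimensional ℂ H) (hK : ¬ FiniteDimensional ℂ K) :
    (∀ (T : H →L[ℂ] K) (ε : ℝ), 0 < ε → ∀ (n : ℕ) (x : Fin n → H) (y : Fin n → K),
      ∃ T' : H →L[ℂ] K, T'.IsComplexSymmetric ∧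
        (∀ i, ‖T' (x i) - T (x i)‖ < ε) ∧
        (∀ i, ‖ContinuousLinearMap.adjoint T' (y i) -
            ContinuousLinearMap.adjoint T (y i)‖ < ε)) ∧
    (∀ (T : H →L[ℂ] K) (ε : ℝ), 0 < ε → ∀ (n : ℕ) (x : Fin n → H),
      ∃ T' : H →L[ℂ] K, T'.IsComplexSymmetric ∧
        ∀ i, ‖T' (x i) - T (x i)‖ < ε) ∧
    (∀ (T : H →L[ℂ] K) (ε : ℝ), 0 < ε → ∀ (n : ℕ) (x : Fin n → H) (y : Fin n → K),
      ∃ T' : H →L[ℂ] K, T'.IsComplexSymmetric ∧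
        ∀ i, ‖(⟪T' (x i) - T (x i), y i⟫_ℂ : ℂ)‖ < ε) := by
  refine ⟨?_, ?_, ?_⟩
  · intro T ε hε n x y
    obtain ⟨T', h1, h2, h3⟩ := exists_exact_approx hH hK T n x y
    exact ⟨T', h1, fun i => by simp [h2 i, hε], fun i => by simp [h3 i, hε]⟩
  · intro T ε hε n x
    obtain ⟨T', h1, h2, _⟩ := exists_exact_approx hH hK T n x 0
    exact ⟨T', h1, fun i => by simp [h2 i, hε]⟩
  · intro T ε hε n x y
    obtain ⟨T', h1, h2, _⟩ := exists_exact_approx hH hK T n x 0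
    exact ⟨T', h1, fun i => by simp [h2 i, hε]⟩
end
end
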